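/- arXiv:1711.06544 — 6 statements merged into one kernel-verified Lean document; each statement's English description precedes it below -/
import Mathlib

section
/- Let n ≥ 2 and let f : (0,1) → [0,1]^n be any function. Define G = ⋃_{t ∈ (0,1)} {y ∈ ℝ^n : ‖y − f(t)‖_∞ = t/2}. Then the lower box dimension of G is at least n − 1/2. -/
open Set Metric MeasureTheory Filter Topology
open scoped ENNReal

/-- Minimal number of closed balls of radius `r` needed to cover `F`. -/
noncomputable def coverNum {X : Type*} [PseudoMetricSpace X] (F : Set X) (r : ℝ) : ℕ :=
  sInf {m : ℕ | ∃ s : Finset X, s.card = m ∧ F ⊆ ⋃ x ∈ s, closedBall x r}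

/-- Lower box(-counting) dimension. -/
noncomputable def lowerBoxDim {X : Type*} [PseudoMetricSpace X] (F : Set X) : ℝ :=
  liminf (fun r : ℝ => Real.log (coverNum F r) / (- Real.log r)) (𝓝[>] 0)

/-- Upper box(-counting) dimension. -/
noncomputable def upperBoxDim {X : Type*} [PseudoMetricSpace X] (F : Set X) : ℝ :=
  limsup (fun r : ℝ => Real.log (coverNum F r) / (- Real.log r)) (𝓝[>] 0)

/-- Assouad dimension. -/
noncomputable def assouadDim {X : Type*} [PseudoMetricSpace X] (F : Set X) : ℝ :=
  sInf {s : ℝ | 0 ≤ s ∧ ∃ C > 0, ∀ x ∈ F, ∀ R > 0, ∀ r : ℝ, 0 < r → r < R →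
    (coverNum (F ∩ closedBall x R) r : ℝ) ≤ C * (R / r) ^ s}


set_option maxHeartbeats 1000000 in
lemma key (n : ℕ) (hn : 2 ≤ n) (f : ℝ → (Fin n → ℝ))
    (hf : ∀ t ∈ Set.Ioo (0:ℝ) 1, ∀ i, f t i ∈ Set.Icc (0:ℝ) 1)
    (r : ℝ) (hr : 0 < r) (hr' : r ≤ 1/100) (s : Finset (Fin n → ℝ))
    (hcov : ∀ t ∈ Set.Ioo (0:ℝ) 1, ∀ y : Fin n → ℝ, ‖y - f t‖ = t/2 → ∃ x ∈ s, dist y x ≤ r) :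
    (((64:ℝ)*r)⁻¹)^(2*n-1) ≤ (s.card : ℝ)^2 := by
  haveI : NeZero n := ⟨by omega⟩
  set K : ℕ := ⌊1/(32*r)⌋₊ with hK
  have h32 : (0:ℝ) < 32*r := by linarith
  have hK3 : 3 ≤ K := by
    have : (3:ℝ) ≤ 1/(32*r) := by rw [le_div_iff₀ h32]; linarith
    exact_mod_cast Nat.le_floor this
  have hKle : (K:ℝ) ≤ 1/(32*r) := Nat.floor_le (by positivity)
  have hKge : 1/(64*r) ≤ (K:ℝ) := by
    have h1 : 1/(32*r) - 1 < (K:ℝ) := Nat.sub_one_lt_floor _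
    have h2 : 1/(64*r) + 1 ≤ 1/(32*r) := by
      rw [div_add' _ _ _ (by linarith : (64:ℝ)*r ≠ 0), div_le_div_iff₀ (by linarith) h32]
      nlinarith
    linarith
  set t : ℕ → ℝ := fun j => 1/2 + 8*r*j with htdef
  have ht4 : ∀ j ≤ K, 8*r*(j:ℝ) ≤ 1/4 := by
    intro j hj
    have hjK : (j:ℝ) ≤ K := by exact_mod_cast hj
    have : 8*r*(j:ℝ) ≤ 8*r*(1/(32*r)) :=
      mul_le_mul_of_nonneg_left (le_trans hjK hKle) (by positivity)
    have h8 : 8*r*(1/(32*r)) = 1/4 := by field_simp; ring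
    linarith [h8 ▸ this]
  have htmem : ∀ j ∈ Finset.Icc 1 K, t j ∈ Set.Ioo (0:ℝ) 1 := by
    intro j hj
    rw [Finset.mem_Icc] at hj
    have h0 : (0:ℝ) ≤ 8*r*j := by positivity
    exact ⟨by simp only [htdef]; linarith, by simp only [htdef]; linarith [ht4 j hj.2]⟩
  have htlo : ∀ j, 1/2 ≤ t j := by
    intro j; have : (0:ℝ) ≤ 8*r*j := by positivity
    simp only [htdef]; linarith
  -- face points
  set a : ℕ → ℝ := fun j => f (t j) 0 + t j / 2 with hadef
  set b : ℕ → ℝ := fun j => f (t j) 0 - t j / 2 with hbdef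
  set pa : ℕ → (Fin n → ℕ) → (Fin n → ℝ) := fun j v i =>
    if i = 0 then a j else 4*r*((⌈f (t j) i / (4*r)⌉₊ : ℝ) + v i) + 2*r with hpa
  set pb : ℕ → (Fin n → ℕ) → (Fin n → ℝ) := fun j v i =>
    if i = 0 then b j else 4*r*((⌈f (t j) i / (4*r)⌉₊ : ℝ) + v i) + 2*r with hpb
  have h4 : (0:ℝ) < 4*r := by linarith
  have hside : ∀ j ∈ Finset.Icc 1 K, ∀ (v : Fin n → ℕ), (∀ i, v i < K) →
      ∀ i, i ≠ 0 → |4*r*((⌈f (t j) i / (4*r)⌉₊ : ℝ) + v i) + 2*r - f (t j) i| ≤ t j / 2 := by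
    intro j hj v hv i hi
    have hfi := hf (t j) (htmem j hj) i
    have hceil1 : f (t j) i ≤ 4*r*(⌈f (t j) i / (4*r)⌉₊ : ℝ) := by
      have h := Nat.le_ceil (f (t j) i / (4*r))
      rw [div_le_iff₀ h4] at h; linarith
    have hceil2 : 4*r*(⌈f (t j) i / (4*r)⌉₊ : ℝ) < f (t j) i + 4*r := by
      have h := Nat.ceil_lt_add_one (div_nonneg hfi.1 (le_of_lt h4) : (0:ℝ) ≤ f (t j) i / (4*r))
      have h2 : 4*r*(⌈f (t j) i / (4*r)⌉₊:ℝ) < 4*r*(f (t j) i / (4*r) + 1) :=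
        mul_lt_mul_of_pos_left h h4
      have h3 : 4*r*(f (t j) i / (4*r) + 1) = f (t j) i + 4*r := by field_simp
      rw [h3] at h2; exact h2
    have hvK : (v i : ℝ) ≤ (K:ℝ) - 1 := by
      have h1 : v i + 1 ≤ K := hv i
      have : ((v i + 1 : ℕ):ℝ) ≤ (K:ℝ) := by exact_mod_cast h1
      push_cast at this; linarith
    have h4rK : 4*r*(K:ℝ) ≤ 1/8 := by
      have := mul_le_mul_of_nonneg_left hKle (by positivity : (0:ℝ) ≤ 4*r)
      have h2 : 4*r*(1/(32*r)) = 1/8 := by field_simp; ring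
      linarith [h2 ▸ this]
    have htj := htlo j
    rw [abs_le]
    constructor
    · nlinarith
    · nlinarith
  have hpa0 : ∀ j v, (pa j v - f (t j)) 0 = t j / 2 := by
    intro j v
    simp only [Pi.sub_apply, hpa]
    rw [if_true]
    simp only [hadef]; ring
  have hpb0 : ∀ j v, (pb j v - f (t j)) 0 = -(t j / 2) := by
    intro j v
    simp only [Pi.sub_apply, hpb]
    rw [if_true]
    simp only [hbdef]; ring
  have hmem : ∀ j ∈ Finset.Icc 1 K, ∀ (v : Fin n → ℕ), (∀ i, v i < K) →
      ‖pa j v - f (t j)‖ = t j / 2 ∧ ‖pb j v - f (t j)‖ = t j / 2 := by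
    intro j hj v hv
    have htj := htlo j
    constructor
    · apply le_antisymm
      · rw [pi_norm_le_iff_of_nonneg (by linarith)]
        intro i
        by_cases hi : i = 0
        · subst hi
          rw [hpa0 j v, Real.norm_eq_abs, abs_of_nonneg (by linarith)]
        · simp only [Pi.sub_apply, hpa, if_neg hi, Real.norm_eq_abs]
          exact hside j hj v hv i hi
      · have h := norm_le_pi_norm (pa j v - f (t j)) 0
        rw [hpa0 j v, Real.norm_eq_abs, abs_of_nonneg (by linarith)] at h
        exact h
    · apply le_antisymm
      · rw [pi_norm_le_iff_of_nonneg (by linarith)]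
        intro i
        by_cases hi : i = 0
        · subst hi
          rw [hpb0 j v, Real.norm_eq_abs, abs_neg, abs_of_nonneg (by linarith)]
        · simp only [Pi.sub_apply, hpb, if_neg hi, Real.norm_eq_abs]
          exact hside j hj v hv i hi
      · have h := norm_le_pi_norm (pb j v - f (t j)) 0
        rw [hpb0 j v, Real.norm_eq_abs, abs_neg, abs_of_nonneg (by linarith)] at h
        exact h
  -- the finset of column offsets
  classical
  set W : Finset (Fin n → ℕ) :=
    Fintype.piFinset (fun i => if i = 0 then ({0} : Finset ℕ) else Finset.range K) with hW
  have hWv : ∀ v ∈ W, (∀ i, v i < K) ∧ v 0 = 0 := by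
    intro v hv
    rw [hW, Fintype.mem_piFinset] at hv
    have h0 : v 0 = 0 := by have := hv 0; rw [if_pos rfl] at this; simpa using this
    refine ⟨fun i => ?_, h0⟩
    by_cases hi : i = 0
    · subst hi; omega
    · have := hv i; rw [if_neg hi, Finset.mem_range] at this; exact this
  -- choice of covering balls for face points
  have hexa : ∀ (j : ℕ) (v : Fin n → ℕ), ∃ x : Fin n → ℝ,
      j ∈ Finset.Icc 1 K → v ∈ W → x ∈ s ∧ dist (pa j v) x ≤ r := by
    intro j v
    by_cases hc : j ∈ Finset.Icc 1 K ∧ v ∈ W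
    · obtain ⟨x, hx1, hx2⟩ := hcov (t j) (htmem j hc.1) (pa j v) ((hmem j hc.1 v (hWv v hc.2).1).1)
      exact ⟨x, fun _ _ => ⟨hx1, hx2⟩⟩
    · exact ⟨0, fun h1 h2 => absurd ⟨h1, h2⟩ hc⟩
  have hexb : ∀ (j : ℕ) (v : Fin n → ℕ), ∃ x : Fin n → ℝ,
      j ∈ Finset.Icc 1 K → v ∈ W → x ∈ s ∧ dist (pb j v) x ≤ r := by
    intro j v
    by_cases hc : j ∈ Finset.Icc 1 K ∧ v ∈ W
    · obtain ⟨x, hx1, hx2⟩ := hcov (t j) (htmem j hc.1) (pb j v) ((hmem j hc.1 v (hWv v hc.2).1).2)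
      exact ⟨x, fun _ _ => ⟨hx1, hx2⟩⟩
    · exact ⟨0, fun h1 h2 => absurd ⟨h1, h2⟩ hc⟩
  choose A hA using hexa
  choose B hB using hexb
  have natabs : ∀ x y : ℕ, |(x:ℝ) - y| ≤ 1/2 → x = y := by
    intro x y h
    rcases lt_trichotomy x y with hl | he | hg
    · have h1 : (x:ℝ) + 1 ≤ y := by exact_mod_cast Nat.succ_le_of_lt hl
      rw [abs_sub_comm, abs_of_nonneg (by linarith)] at h; linarith
    · exact he
    · have h1 : (y:ℝ) + 1 ≤ x := by exact_mod_cast Nat.succ_le_of_lt hg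
      rw [abs_of_nonneg (by linarith)] at h; linarith
  set D : Finset (ℕ × ((Fin n → ℕ) × (Fin n → ℕ))) :=
    (Finset.Icc 1 K) ×ˢ (W ×ˢ W) with hD
  have hmaps : ∀ x ∈ D, (A x.1 x.2.1, B x.1 x.2.2) ∈ s ×ˢ s := by
    intro x hx
    rw [hD, Finset.mem_product, Finset.mem_product] at hx
    rw [Finset.mem_product]
    exact ⟨(hA x.1 x.2.1 hx.1 hx.2.1).1, (hB x.1 x.2.2 hx.1 hx.2.2).1⟩
  have hinj : Set.InjOn (fun x : ℕ × ((Fin n → ℕ) × (Fin n → ℕ)) =>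
      (A x.1 x.2.1, B x.1 x.2.2)) ↑D := by
    rintro ⟨j, v, w⟩ hp ⟨j', v', w'⟩ hq heq
    simp only [Finset.coe_product, hD, Set.mem_prod, Finset.mem_coe] at hp hq
    have hj := hp.1
    have hv := hp.2.1
    have hw := hp.2.2
    have hj' := hq.1
    have hv' := hq.2.1
    have hw' := hq.2.2
    simp only [Prod.mk.injEq] at heq
    obtain ⟨heqA, heqB⟩ := heq
    have dA := (hA j v hj hv).2
    have dA' := (hA j' v' hj' hv').2
    have dB := (hB j w hj hw).2
    have dB' := (hB j' w' hj' hw').2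
    rw [heqA] at dA
    rw [heqB] at dB
    have coordA : ∀ i, |pa j v i - A j' v' i| ≤ r :=
      fun i => by have := le_trans (dist_le_pi_dist (pa j v) (A j' v') i) dA
                  rwa [Real.dist_eq] at this
    have coordA' : ∀ i, |pa j' v' i - A j' v' i| ≤ r :=
      fun i => by have := le_trans (dist_le_pi_dist (pa j' v') (A j' v') i) dA'
                  rwa [Real.dist_eq] at this
    have coordB : ∀ i, |pb j w i - B j' w' i| ≤ r :=
      fun i => by have := le_trans (dist_le_pi_dist (pb j w) (B j' w') i) dB
                  rwa [Real.dist_eq] at this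
    have coordB' : ∀ i, |pb j' w' i - B j' w' i| ≤ r :=
      fun i => by have := le_trans (dist_le_pi_dist (pb j' w') (B j' w') i) dB'
                  rwa [Real.dist_eq] at this
    -- coordinate 0 gives |a j - a j'| ≤ 2r and |b j - b j'| ≤ 2r
    have hpa0' : ∀ jj vv, pa jj vv 0 = a jj := by
      intro jj vv; simp only [hpa]; rw [if_true]
    have hpb0' : ∀ jj vv, pb jj vv 0 = b jj := by
      intro jj vv; simp only [hpb]; rw [if_true]
    have haa : |a j - a j'| ≤ 2*r := by
      have h1 := coordA 0; have h2 := coordA' 0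
      rw [hpa0'] at h1 h2
      have := abs_sub_le (a j) (A j' v' 0) (a j')
      rw [abs_sub_comm (A j' v' 0)] at this
      linarith
    have hbb : |b j - b j'| ≤ 2*r := by
      have h1 := coordB 0; have h2 := coordB' 0
      rw [hpb0'] at h1 h2
      have := abs_sub_le (b j) (B j' w' 0) (b j')
      rw [abs_sub_comm (B j' w' 0)] at this
      linarith
    have htt : |t j - t j'| ≤ 4*r := by
      have hid : t j - t j' = (a j - a j') - (b j - b j') := by
        simp only [hadef, hbdef]; ring
      rw [hid]
      have := abs_sub (a j - a j') (b j - b j')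
      calc |(a j - a j') - (b j - b j')| ≤ |a j - a j'| + |b j - b j'| := abs_sub _ _
        _ ≤ 4*r := by linarith
    have hjj : j = j' := by
      apply natabs
      have hid : t j - t j' = 8*r*((j:ℝ) - j') := by simp only [htdef]; ring
      rw [hid, abs_mul, abs_of_pos (by linarith : (0:ℝ) < 8*r)] at htt
      have h8 : (0:ℝ) < 8*r := by linarith
      calc |(j:ℝ) - (j':ℝ)| = 8*r*|(j:ℝ) - (j':ℝ)| / (8*r) := by field_simp
        _ ≤ 4*r/(8*r) := by gcongr
        _ = 1/2 := by rw [div_eq_iff (ne_of_gt h8)]; ring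
    subst hjj
    have hvw : ∀ (u u' : Fin n → ℕ), u ∈ W → u' ∈ W →
        (∀ i, i ≠ 0 → |4*r*((u i:ℝ) - (u' i:ℝ))| ≤ 2*r) → u = u' := by
      intro u u' hu hu' hcl
      funext i
      by_cases hi : i = 0
      · subst hi; rw [(hWv u hu).2, (hWv u' hu').2]
      · apply natabs
        have h3 := hcl i hi
        rw [abs_mul, abs_of_pos h4] at h3
        calc |(u i:ℝ) - (u' i:ℝ)| = 4*r*|(u i:ℝ) - (u' i:ℝ)| / (4*r) := by field_simp
          _ ≤ 2*r/(4*r) := by gcongr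
          _ = 1/2 := by rw [div_eq_iff (ne_of_gt h4)]; ring
    have hvv : v = v' := by
      apply hvw v v' hv hv'
      intro i hi
      have h1 := coordA i; have h2 := coordA' i
      simp only [hpa, if_neg hi] at h1 h2
      have hdiff : 4*r*((v i:ℝ) - (v' i:ℝ)) =
          (4*r*((⌈f (t j) i/(4*r)⌉₊:ℝ) + v i) + 2*r - A j v' i)
          - (4*r*((⌈f (t j) i/(4*r)⌉₊:ℝ) + v' i) + 2*r - A j v' i) := by ring
      have h5 := abs_sub (4*r*((⌈f (t j) i/(4*r)⌉₊:ℝ) + v i) + 2*r - A j v' i)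
        (4*r*((⌈f (t j) i/(4*r)⌉₊:ℝ) + v' i) + 2*r - A j v' i)
      rw [hdiff]
      linarith
    have hww : w = w' := by
      apply hvw w w' hw hw'
      intro i hi
      have h1 := coordB i; have h2 := coordB' i
      simp only [hpb, if_neg hi] at h1 h2
      have hdiff : 4*r*((w i:ℝ) - (w' i:ℝ)) =
          (4*r*((⌈f (t j) i/(4*r)⌉₊:ℝ) + w i) + 2*r - B j w' i)
          - (4*r*((⌈f (t j) i/(4*r)⌉₊:ℝ) + w' i) + 2*r - B j w' i) := by ring
      have h5 := abs_sub (4*r*((⌈f (t j) i/(4*r)⌉₊:ℝ) + w i) + 2*r - B j w' i)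
        (4*r*((⌈f (t j) i/(4*r)⌉₊:ℝ) + w' i) + 2*r - B j w' i)
      rw [hdiff]
      linarith
    rw [hvv, hww]
  -- counting
  have hcard := Finset.card_le_card_of_injOn _ hmaps hinj
  have hWcard : W.card = K^(n-1) := by
    rw [hW, Fintype.card_piFinset]
    have step : ∀ i : Fin n, (if i = 0 then ({0}:Finset ℕ) else Finset.range K).card
        = if i = 0 then 1 else K := by
      intro i; by_cases hi : i = 0 <;> simp [hi]
    rw [Finset.prod_congr rfl (fun i _ => step i)]
    rw [← Finset.mul_prod_erase (Finset.univ : Finset (Fin n)) _ (Finset.mem_univ 0),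
      if_pos rfl, one_mul]
    rw [Finset.prod_congr rfl (fun i hi => if_neg (Finset.ne_of_mem_erase hi))]
    rw [Finset.prod_const, Finset.card_erase_of_mem (Finset.mem_univ 0), Finset.card_univ,
      Fintype.card_fin]
  have hDcard : D.card = K^(2*n-1) := by
    rw [hD, Finset.card_product, Finset.card_product, Nat.card_Icc, hWcard]
    have h1 : K + 1 - 1 = K := by omega
    rw [h1, ← pow_add]
    have h2 : K * K ^ ((n-1) + (n-1)) = K ^ (1 + ((n-1)+(n-1))) := by ring
    rw [h2]
    congr 1
    omega
  rw [hDcard, Finset.card_product] at hcard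
  have hfinR : ((K:ℝ))^(2*n-1) ≤ (s.card:ℝ)^2 := by
    rw [sq]; exact_mod_cast hcard
  have hbase : (0:ℝ) ≤ ((64:ℝ)*r)⁻¹ := by positivity
  have hKinv : ((64:ℝ)*r)⁻¹ ≤ (K:ℝ) := by rw [inv_eq_one_div]; exact hKge
  calc (((64:ℝ)*r)⁻¹)^(2*n-1) ≤ (K:ℝ)^(2*n-1) := pow_le_pow_left₀ hbase hKinv _
    _ ≤ (s.card:ℝ)^2 := hfinR

-- grid cover
set_option maxHeartbeats 1000000 in
lemma gridcover (n : ℕ) (hn : 1 ≤ n) (F : Set (Fin n → ℝ)) (hF : F ⊆ closedBall 0 2)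
    (r : ℝ) (hr : 0 < r) :
    ∃ s : Finset (Fin n → ℝ), (F ⊆ ⋃ x ∈ s, closedBall x r) ∧ s.card ≤ (⌊4/r⌋₊ + 1)^n := by
  classical
  set M : ℕ := ⌊4/r⌋₊ + 1 with hM
  set ctr : (Fin n → ℕ) → (Fin n → ℝ) := fun z i => 2*r*(z i) + r - 2 with hctr
  set s : Finset (Fin n → ℝ) :=
    (Fintype.piFinset (fun _ : Fin n => Finset.range M)).image ctr with hs
  refine ⟨s, ?_, ?_⟩
  · intro y hy
    have hyb := hF hy
    rw [mem_closedBall, dist_zero_right] at hyb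
    set z : Fin n → ℕ := fun i => ⌊(y i + 2)/(2*r)⌋₊ with hz
    have h2r : (0:ℝ) < 2*r := by linarith
    have hyi : ∀ i, |y i| ≤ 2 := by
      intro i
      have := norm_le_pi_norm y i
      rw [Real.norm_eq_abs] at this
      linarith
    have hznn : ∀ i, (0:ℝ) ≤ (y i + 2)/(2*r) := by
      intro i
      have h := (hyi i)
      rw [abs_le] at h
      exact div_nonneg (by linarith) (le_of_lt h2r)
    have hzmem : z ∈ Fintype.piFinset (fun _ : Fin n => Finset.range M) := by
      rw [Fintype.mem_piFinset]
      intro i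
      rw [Finset.mem_range, hM]
      have h1 : z i ≤ ⌊4/r⌋₊ := by
        apply Nat.floor_mono
        rw [div_le_div_iff₀ h2r (by linarith : (0:ℝ) < r)]
        have := (hyi i); rw [abs_le] at this
        nlinarith
      omega
    rw [Set.mem_iUnion₂]
    refine ⟨ctr z, Finset.mem_image_of_mem ctr hzmem, ?_⟩
    rw [mem_closedBall]
    rw [dist_pi_le_iff hr.le]
    intro i
    rw [Real.dist_eq, abs_le]
    have hfl1 : (z i : ℝ) ≤ (y i + 2)/(2*r) := Nat.floor_le (hznn i)
    have hfl2 : (y i + 2)/(2*r) < (z i : ℝ) + 1 := Nat.lt_floor_add_one _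
    have hid : 2*r*((y i + 2)/(2*r)) = y i + 2 := by field_simp
    have e1 : 2*r*(z i : ℝ) ≤ y i + 2 := by
      have := mul_le_mul_of_nonneg_left hfl1 (le_of_lt h2r)
      rw [hid] at this; exact this
    have e2 : y i + 2 < 2*r*((z i : ℝ) + 1) := by
      have := mul_lt_mul_of_pos_left hfl2 h2r
      rw [hid] at this; exact this
    constructor
    · simp only [hctr]; nlinarith
    · simp only [hctr]; nlinarith
  · calc s.card ≤ (Fintype.piFinset (fun _ : Fin n => Finset.range M)).card :=
        Finset.card_image_le
      _ = ∏ _i : Fin n, M := by rw [Fintype.card_piFinset]; simp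
      _ = M^n := by rw [Finset.prod_const, Finset.card_univ, Fintype.card_fin]

/-- Any set containing boundaries of axis-aligned cubes of all side
lengths in `(0,1)` has lower box dimension at least `n - 1/2`. -/
theorem cube_packing_lowerBoxDim_ge (n : ℕ) (hn : 2 ≤ n) (f : ℝ → (Fin n → ℝ))
    (hf : ∀ t ∈ Set.Ioo (0:ℝ) 1, ∀ i, f t i ∈ Set.Icc (0:ℝ) 1) :
    (n : ℝ) - 1/2 ≤
      lowerBoxDim (⋃ t ∈ Set.Ioo (0:ℝ) 1, {y : Fin n → ℝ | ‖y - f t‖ = t / 2}) := by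
  set G := ⋃ t ∈ Set.Ioo (0:ℝ) 1, {y : Fin n → ℝ | ‖y - f t‖ = t / 2} with hG
  have hnR : (2:ℝ) ≤ (n:ℝ) := by exact_mod_cast hn
  have hGb : G ⊆ Metric.closedBall 0 2 := by
    intro y hy
    rw [hG, Set.mem_iUnion₂] at hy
    obtain ⟨t, ht, hyt⟩ := hy
    rw [Set.mem_setOf_eq] at hyt
    rw [Metric.mem_closedBall, dist_zero_right]
    have hf1 : ‖f t‖ ≤ 1 := by
      rw [pi_norm_le_iff_of_nonneg (by norm_num : (0:ℝ) ≤ 1)]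
      intro i
      have h := hf t ht i
      rw [Real.norm_eq_abs, abs_le]
      exact ⟨by linarith [h.1], h.2⟩
    calc ‖y‖ = ‖(y - f t) + f t‖ := by rw [sub_add_cancel]
      _ ≤ ‖y - f t‖ + ‖f t‖ := norm_add_le _ _
      _ ≤ t/2 + 1 := by rw [hyt]; linarith
      _ ≤ 2 := by linarith [ht.2]
  have hbound : ∀ r : ℝ, 0 < r → r < 1/100 →
      (((64:ℝ)*r)⁻¹)^((n:ℝ) - 1/2) ≤ (coverNum G r : ℝ) ∧
      (coverNum G r : ℝ) ≤ ((5:ℝ)/r)^n := by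
    intro r hr hr'
    constructor
    · have hne : {m : ℕ | ∃ s : Finset (Fin n → ℝ), s.card = m ∧
          G ⊆ ⋃ x ∈ s, Metric.closedBall x r}.Nonempty := by
        obtain ⟨s, hs1, _⟩ := gridcover n (by omega) G hGb r hr
        exact ⟨s.card, s, rfl, hs1⟩
      obtain ⟨s, hcard, hcov⟩ := Nat.sInf_mem hne
      have hcov' : ∀ t ∈ Set.Ioo (0:ℝ) 1, ∀ y : Fin n → ℝ, ‖y - f t‖ = t/2 →
          ∃ x ∈ s, dist y x ≤ r := by
        intro t ht y hy
        have hyG : y ∈ G := by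
          rw [hG]; exact Set.mem_biUnion ht hy
        have h2 := hcov hyG
        rw [Set.mem_iUnion₂] at h2
        obtain ⟨x, hx, hx2⟩ := h2
        exact ⟨x, hx, by rwa [Metric.mem_closedBall] at hx2⟩
      have hkey := key n hn f hf r hr (by linarith) s hcov'
      have hx0 : (0:ℝ) < ((64:ℝ)*r)⁻¹ := by positivity
      have h1 : Real.sqrt ((((64:ℝ)*r)⁻¹)^(2*n-1)) ≤ Real.sqrt ((s.card:ℝ)^2) :=
        Real.sqrt_le_sqrt hkey
      rw [Real.sqrt_sq (Nat.cast_nonneg _)] at h1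
      have h2 : Real.sqrt ((((64:ℝ)*r)⁻¹)^(2*n-1)) = (((64:ℝ)*r)⁻¹)^((n:ℝ) - 1/2) := by
        rw [Real.sqrt_eq_rpow, ← Real.rpow_natCast (((64:ℝ)*r)⁻¹) (2*n-1),
          ← Real.rpow_mul (le_of_lt hx0)]
        congr 1
        have hc : ((2*n-1 : ℕ):ℝ) = 2*(n:ℝ) - 1 := by
          have h1n : (1:ℕ) ≤ 2*n := by omega
          rw [Nat.cast_sub h1n]
          push_cast
          ring
        rw [hc]
        ring
      rw [h2] at h1
      have hcn : coverNum G r = s.card := hcard.symm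
      rw [hcn]
      exact h1
    · obtain ⟨s, hs1, hs2⟩ := gridcover n (by omega) G hGb r hr
      have hle : coverNum G r ≤ s.card := Nat.sInf_le ⟨s, rfl, hs1⟩
      have hfl : ((⌊4/r⌋₊:ℝ) + 1) ≤ 5/r := by
        have h1 : ((⌊4/r⌋₊:ℝ)) ≤ 4/r := Nat.floor_le (by positivity)
        have h2 : (1:ℝ) ≤ 1/r := by
          rw [le_div_iff₀ hr]; linarith
        have h3 : (4:ℝ)/r + 1/r = 5/r := by ring
        linarith
      calc (coverNum G r : ℝ) ≤ (s.card : ℝ) := by exact_mod_cast hle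
        _ ≤ (((⌊4/r⌋₊ + 1)^n : ℕ):ℝ) := by exact_mod_cast hs2
        _ = ((⌊4/r⌋₊:ℝ) + 1)^n := by push_cast; ring
        _ ≤ ((5:ℝ)/r)^n := pow_le_pow_left₀ (by positivity) hfl n
  -- eventual upper bound on the ratio
  have hub : ∀ᶠ r in 𝓝[>] (0:ℝ),
      Real.log (coverNum G r) / (-Real.log r) ≤ 2*(n:ℝ) := by
    have hev : Set.Ioo (0:ℝ) (1/100) ∈ 𝓝[>] (0:ℝ) :=
      Ioo_mem_nhdsGT_of_mem ⟨le_refl 0, by norm_num⟩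
    filter_upwards [hev] with r hrm
    obtain ⟨hr0, hr1⟩ := hrm
    obtain ⟨hlow, hup⟩ := hbound r hr0 hr1
    have hx0 : (0:ℝ) < ((64:ℝ)*r)⁻¹ := by positivity
    have hx1 : (1:ℝ) ≤ ((64:ℝ)*r)⁻¹ := by
      rw [le_inv_comm₀ (by norm_num) (by positivity)]
      linarith
    have hN1 : (1:ℝ) ≤ (coverNum G r : ℝ) := by
      have h0 : (((64:ℝ)*r)⁻¹)^((0:ℝ)) ≤ (((64:ℝ)*r)⁻¹)^((n:ℝ) - 1/2) :=
        Real.rpow_le_rpow_of_exponent_le hx1 (by linarith)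
      rw [Real.rpow_zero] at h0
      linarith
    have hd : 0 < -Real.log r := by
      have : Real.log r < 0 := Real.log_neg hr0 (by linarith)
      linarith
    have hlogN : Real.log (coverNum G r) ≤ (n:ℝ) * Real.log (5/r) := by
      calc Real.log (coverNum G r) ≤ Real.log (((5:ℝ)/r)^n) :=
            Real.log_le_log (by linarith) hup
        _ = (n:ℝ) * Real.log (5/r) := by rw [Real.log_pow]
    have h5r : Real.log 5 + Real.log r ≤ 0 := by
      rw [← Real.log_mul (by norm_num) (ne_of_gt hr0)]
      apply Real.log_nonpos (by positivity) (by linarith)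
    have hsplit : Real.log ((5:ℝ)/r) = Real.log 5 - Real.log r :=
      Real.log_div (by norm_num) (ne_of_gt hr0)
    rw [div_le_iff₀ hd]
    have hn0 : (0:ℝ) ≤ (n:ℝ) := by positivity
    nlinarith [hlogN, h5r, hsplit, hd]
  have hcob : Filter.IsCoboundedUnder (· ≥ ·) (𝓝[>] (0:ℝ))
      (fun r : ℝ => Real.log (coverNum G r) / (-Real.log r)) := by
    apply Filter.IsBoundedUnder.isCoboundedUnder_ge
    exact ⟨2*(n:ℝ), eventually_map.2 hub⟩
  have hlb : ∀ ε : ℝ, 0 < ε →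
      ((n:ℝ) - 1/2) - ε ≤ liminf (fun r : ℝ => Real.log (coverNum G r) / (-Real.log r))
        (𝓝[>] (0:ℝ)) := by
    intro ε hε
    apply Filter.le_liminf_of_le hcob
    set c : ℝ := ((n:ℝ) - 1/2) * Real.log 64 with hcdef
    have hc0 : 0 ≤ c := mul_nonneg (by linarith) (Real.log_nonneg (by norm_num))
    set δ : ℝ := min (1/100) (Real.exp (-(c/ε))) with hδdef
    have hδ0 : 0 < δ := lt_min (by norm_num) (Real.exp_pos _)
    have hev : Set.Ioo (0:ℝ) δ ∈ 𝓝[>] (0:ℝ) :=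
      Ioo_mem_nhdsGT_of_mem ⟨le_refl 0, hδ0⟩
    filter_upwards [hev] with r hrm
    obtain ⟨hr0, hrδ⟩ := hrm
    have hr1 : r < 1/100 := lt_of_lt_of_le hrδ (min_le_left _ _)
    obtain ⟨hlow, _⟩ := hbound r hr0 hr1
    have hd : 0 < -Real.log r := by
      have : Real.log r < 0 := Real.log_neg hr0 (by linarith)
      linarith
    have hdc : c ≤ ε * (-Real.log r) := by
      have h1 : Real.log r < -(c/ε) := by
        calc Real.log r < Real.log δ := Real.log_lt_log hr0 hrδ
          _ ≤ Real.log (Real.exp (-(c/ε))) := Real.log_le_log hδ0 (min_le_right _ _)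
          _ = -(c/ε) := Real.log_exp _
      have h2 : c/ε < -Real.log r := by linarith
      have h3 := (div_lt_iff₀ hε).mp h2
      nlinarith
    have hx0 : (0:ℝ) < ((64:ℝ)*r)⁻¹ := by positivity
    have hlogN : ((n:ℝ) - 1/2) * (-Real.log r) - c ≤ Real.log (coverNum G r) := by
      have h1 : Real.log ((((64:ℝ)*r)⁻¹)^((n:ℝ) - 1/2)) ≤ Real.log (coverNum G r) :=
        Real.log_le_log (Real.rpow_pos_of_pos hx0 _) hlow
      rw [Real.log_rpow hx0] at h1
      have hlx : Real.log (((64:ℝ)*r)⁻¹) = -(Real.log 64 + Real.log r) := by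
        rw [Real.log_inv, Real.log_mul (by norm_num) (ne_of_gt hr0)]
      rw [hlx] at h1
      have he : ((n:ℝ) - 1/2) * (-(Real.log 64 + Real.log r))
          = ((n:ℝ) - 1/2) * (-Real.log r) - c := by
        rw [hcdef]; ring
      rw [he] at h1
      exact h1
    rw [le_div_iff₀ hd]
    have hexp : ((n:ℝ) - 1/2 - ε) * (-Real.log r)
        = ((n:ℝ) - 1/2) * (-Real.log r) - ε * (-Real.log r) := by ring
    rw [hexp]
    linarith
  rw [lowerBoxDim, hG] at *
  apply le_of_forall_pos_le_add
  intro ε hε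
  have := hlb ε hε
  linarith
end

section
/- Let n ≥ 2 and let f : (0,1) → [0,1]^n be any function, and let G = ⋃_{t ∈ (0,1)} {y ∈ ℝ^n : ‖y − f(t)‖_∞ = t/2}. Then the Assouad dimension of G is at least n − 1/2. -/
open Set Metric MeasureTheory Filter Topology
open scoped ENNReal

lemma coverNum_le_card {X : Type*} [PseudoMetricSpace X] {F : Set X} {r : ℝ}
    {s : Finset X} (h : F ⊆ ⋃ x ∈ s, closedBall x r) : coverNum F r ≤ s.card :=
  Nat.sInf_le ⟨s, rfl, h⟩

lemma pack_le_coverNum {X : Type*} [PseudoMetricSpace X] {F : Set X} {r : ℝ}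
    (P : Finset X) (hPF : ∀ p ∈ P, p ∈ F)
    (hsep : ∀ p ∈ P, ∀ q ∈ P, p ≠ q → 2 * r < dist p q)
    (hcov : ∃ s : Finset X, F ⊆ ⋃ x ∈ s, closedBall x r) :
    P.card ≤ coverNum F r := by
  have hne : {m : ℕ | ∃ s : Finset X, s.card = m ∧ F ⊆ ⋃ x ∈ s, closedBall x r}.Nonempty := by
    obtain ⟨s, hs⟩ := hcov; exact ⟨s.card, s, rfl, hs⟩
  obtain ⟨s, hcard, hsub⟩ := Nat.sInf_mem hne
  have hch : ∀ p : X, ∃ c : X, p ∈ P → c ∈ s ∧ p ∈ closedBall c r := by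
    intro p
    by_cases hp : p ∈ P
    · have := hsub (hPF p hp)
      simp only [Set.mem_iUnion] at this
      obtain ⟨c, hc, hpc⟩ := this
      exact ⟨c, fun _ => ⟨hc, hpc⟩⟩
    · exact ⟨p, fun h => absurd h hp⟩
  choose c hc using hch
  rw [coverNum, ← hcard]
  apply Finset.card_le_card_of_injOn c (fun p hp => (hc p hp).1)
  intro p hp q hq hpq
  by_contra hne'
  have h1 := (hc p hp).2
  have h2 := (hc q hq).2
  have : dist p q ≤ 2 * r := by
    rw [mem_closedBall] at h1 h2
    rw [hpq] at h1
    have := dist_triangle p (c q) q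
    have h2' : dist (c q) q ≤ r := by rw [dist_comm]; exact h2
    linarith
  exact absurd this (not_le.2 (hsep p hp q hq hne'))

lemma cube_cover (n : ℕ) (x : Fin n → ℝ) {R r : ℝ} (hr : 0 < r) (hR : 0 < R) :
    ∃ s : Finset (Fin n → ℝ), (closedBall x R ⊆ ⋃ y ∈ s, closedBall y r) ∧
      (s.card : ℝ) ≤ (R / r + 1) ^ n := by
  set K := ⌈R / r⌉₊ with hKdef
  have hK : 0 < K := Nat.ceil_pos.2 (div_pos hR hr)
  set g : (Fin n → Fin K) → (Fin n → ℝ) :=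
    fun v i => x i - R + r + 2 * r * (v i : ℕ) with hg
  refine ⟨Finset.image g Finset.univ, ?_, ?_⟩
  · intro y hy
    rw [mem_closedBall] at hy
    have hyc : ∀ i, |y i - x i| ≤ R := by
      intro i
      have := (dist_pi_le_iff hR.le).1 hy i
      rwa [Real.dist_eq] at this
    have hv : ∀ i : Fin n, min ⌊(y i - x i + R) / (2 * r)⌋₊ (K - 1) < K := by
      intro i; exact lt_of_le_of_lt (min_le_right _ _) (by omega)
    set v : Fin n → Fin K := fun i => ⟨min ⌊(y i - x i + R) / (2 * r)⌋₊ (K - 1), hv i⟩ with hvdef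
    have : y ∈ closedBall (g v) r := by
      rw [mem_closedBall]
      rw [dist_pi_le_iff hr.le]
      intro i
      rw [Real.dist_eq]
      set z := y i - x i + R with hz
      have hz0 : 0 ≤ z := by have := (abs_le.1 (hyc i)).1; linarith
      have hz2 : z ≤ 2 * R := by have := (abs_le.1 (hyc i)).2; linarith
      have h2r : (0:ℝ) < 2 * r := by linarith
      have hgv : g v i = x i - R + r + 2 * r * (min ⌊z / (2*r)⌋₊ (K - 1) : ℕ) := rfl
      rw [hgv]
      rw [abs_le]
      by_cases hcase : ⌊z / (2*r)⌋₊ ≤ K - 1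
      · rw [min_eq_left hcase]
        have h1 : (⌊z / (2*r)⌋₊ : ℝ) ≤ z / (2*r) := Nat.floor_le (by positivity)
        have h2 : z / (2*r) < ⌊z / (2*r)⌋₊ + 1 := Nat.lt_floor_add_one _
        have h1' : 2 * r * (⌊z / (2*r)⌋₊ : ℝ) ≤ z := by
          rw [mul_comm]; exact (le_div_iff₀ h2r).1 h1
        have h2' : z < 2 * r * ((⌊z / (2*r)⌋₊ : ℝ) + 1) := by
          rw [mul_comm]; exact (div_lt_iff₀ h2r).1 h2
        constructor <;> [skip; skip] <;> nlinarith
      · push_neg at hcase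
        rw [min_eq_right (by omega)]
        have hfl : (⌊z / (2*r)⌋₊ : ℝ) ≤ z / (2*r) := Nat.floor_le (by positivity)
        have hKfl : (K : ℝ) ≤ (⌊z / (2*r)⌋₊ : ℝ) := by exact_mod_cast by omega
        have hzK : 2 * r * K ≤ z := by
          have : (K:ℝ) ≤ z / (2*r) := le_trans hKfl hfl
          rw [mul_comm]; exact (le_div_iff₀ h2r).1 this
        have hRK : R ≤ r * K := by
          have := Nat.le_ceil (R / r)
          rw [← hKdef] at this
          calc R = (R / r) * r := by field_simp
          _ ≤ (K:ℝ) * r := by apply mul_le_mul_of_nonneg_right this hr.le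
          _ = r * K := by ring
        have hKcast : ((K - 1 : ℕ) : ℝ) = (K : ℝ) - 1 := by
          have : (1:ℕ) ≤ K := hK
          push_cast [this]; ring
        rw [hKcast]
        constructor <;> nlinarith
    simp only [Set.mem_iUnion]
    exact ⟨g v, Finset.mem_image_of_mem g (Finset.mem_univ v), this⟩
  · calc (Finset.card (Finset.image g Finset.univ) : ℝ)
        ≤ (Finset.univ : Finset (Fin n → Fin K)).card := by
          exact_mod_cast Finset.card_image_le
    _ = ((K ^ n : ℕ) : ℝ) := by
          rw [Finset.card_univ, Fintype.card_fun, Fintype.card_fin, Fintype.card_fin]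
    _ ≤ (R / r + 1) ^ n := by
          push_cast
          apply pow_le_pow_left₀ (by positivity)
          exact le_of_lt (Nat.ceil_lt_add_one (by positivity))

lemma mem_G_bounds (n : ℕ) (f : ℝ → (Fin n → ℝ))
    (hf : ∀ t ∈ Set.Ioo (0:ℝ) 1, ∀ i, f t i ∈ Set.Icc (0:ℝ) 1) :
    ∀ y ∈ (⋃ t ∈ Set.Ioo (0:ℝ) 1, {y : Fin n → ℝ | ‖y - f t‖ = t / 2}),
      ∀ i, y i ∈ Set.Icc (-(1/2) : ℝ) (3/2) := by
  intro y hy i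
  simp only [Set.mem_iUnion, Set.mem_setOf_eq] at hy
  obtain ⟨t, ht, hyt⟩ := hy
  have h1 : |y i - f t i| ≤ t / 2 := by
    have := norm_le_pi_norm (y - f t) i
    rw [hyt] at this
    simpa [Real.norm_eq_abs] using this
  have h2 := hf t ht i
  obtain ⟨ht0, ht1⟩ := ht
  rw [abs_le] at h1
  obtain ⟨h2a, h2b⟩ := h2
  rw [Set.mem_Icc]
  constructor <;> linarith [h1.1, h1.2]

lemma G_cover_exists (n : ℕ) (f : ℝ → (Fin n → ℝ))
    (hf : ∀ t ∈ Set.Ioo (0:ℝ) 1, ∀ i, f t i ∈ Set.Icc (0:ℝ) 1) {r : ℝ} (hr : 0 < r) :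
    ∃ s : Finset (Fin n → ℝ),
      (⋃ t ∈ Set.Ioo (0:ℝ) 1, {y : Fin n → ℝ | ‖y - f t‖ = t / 2}) ⊆
        ⋃ x ∈ s, closedBall x r := by
  obtain ⟨s, hs, -⟩ := cube_cover n (fun _ => (1/2 : ℝ)) hr (show (0:ℝ) < 2 by norm_num)
  refine ⟨s, fun y hy => hs ?_⟩
  rw [mem_closedBall, dist_pi_le_iff (by norm_num)]
  intro i
  have := mem_G_bounds n f hf y hy i
  rw [Real.dist_eq]
  obtain ⟨h1, h2⟩ := this
  rw [abs_le]
  constructor <;> linarith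

/-- The packing points on the faces. -/
noncomputable def phi (m K : ℕ) (tk : ℤ → ℝ) (f : ℝ → (Fin (m+2) → ℝ)) (σ r : ℝ)
    (p : ℤ × (Fin (m+1) → Fin K)) : Fin (m+2) → ℝ :=
  Fin.cons (f (tk p.1) 0 + σ * (tk p.1 / 2))
    (fun j => f (tk p.1) j.succ - tk p.1 / 2 + 3 * r * ((p.2 j : ℕ) : ℝ))

lemma phi_zero (m K : ℕ) (tk : ℤ → ℝ) (f : ℝ → (Fin (m+2) → ℝ)) (σ r : ℝ)
    (p : ℤ × (Fin (m+1) → Fin K)) :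
    phi m K tk f σ r p 0 = f (tk p.1) 0 + σ * (tk p.1 / 2) := rfl

lemma phi_succ (m K : ℕ) (tk : ℤ → ℝ) (f : ℝ → (Fin (m+2) → ℝ)) (σ r : ℝ)
    (p : ℤ × (Fin (m+1) → Fin K)) (j : Fin (m+1)) :
    phi m K tk f σ r p j.succ = f (tk p.1) j.succ - tk p.1 / 2 + 3 * r * ((p.2 j : ℕ) : ℝ) := by
  rw [phi, Fin.cons_succ]

lemma face_pack (m : ℕ) (f : ℝ → (Fin (m+2) → ℝ))
    (hf : ∀ t ∈ Set.Ioo (0:ℝ) 1, ∀ i, f t i ∈ Set.Icc (0:ℝ) 1)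
    {r σ : ℝ} (hr : 0 < r) (hr' : r ≤ 1/100) (hσ : σ = 1 ∨ σ = -1)
    (E : Finset ℤ)
    (hsep : ∀ k ∈ E, ∀ k' ∈ E, k ≠ k' → 2 ≤ |k - k'|)
    (hocc : ∀ k ∈ E, ∃ t : ℝ, t ∈ Set.Icc (1/2:ℝ) (1 - 4*r) ∧
      ⌊(f t 0 + σ*(t/2))/(4*r)⌋ = k) :
    E.card * (⌊1/(6*r)⌋₊)^(m+1) ≤
      coverNum (⋃ t ∈ Set.Ioo (0:ℝ) 1, {y : Fin (m+2) → ℝ | ‖y - f t‖ = t / 2}) r := by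
  classical
  set G := (⋃ t ∈ Set.Ioo (0:ℝ) 1, {y : Fin (m+2) → ℝ | ‖y - f t‖ = t / 2}) with hG
  set K := ⌊1/(6*r)⌋₊ with hKdef
  have h4r : (0:ℝ) < 4 * r := by linarith
  have hK1 : 1 ≤ K := by
    rw [hKdef]
    apply Nat.le_floor
    rw [Nat.cast_one, le_div_iff₀ (by linarith)]
    linarith
  have hKr : (K : ℝ) ≤ 1/(6*r) := Nat.floor_le (by positivity)
  have hocc' : ∀ k : ℤ, ∃ t : ℝ, k ∈ E → (t ∈ Set.Icc (1/2:ℝ) (1 - 4*r) ∧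
      ⌊(f t 0 + σ*(t/2))/(4*r)⌋ = k) := by
    intro k
    by_cases hk : k ∈ E
    · obtain ⟨t, h1, h2⟩ := hocc k hk; exact ⟨t, fun _ => ⟨h1, h2⟩⟩
    · exact ⟨0, fun h => absurd h hk⟩
  choose tk htk using hocc'
  have htmem : ∀ k ∈ E, tk k ∈ Set.Icc (1/2:ℝ) (1 - 4*r) := fun k hk => (htk k hk).1
  have htIoo : ∀ k ∈ E, tk k ∈ Set.Ioo (0:ℝ) 1 := by
    intro k hk
    obtain ⟨h1, h2⟩ := htmem k hk
    constructor <;> linarith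
  have habs : |σ| = 1 := by rcases hσ with h | h <;> rw [h] <;> norm_num
  have hheight : ∀ k ∈ E, 4*r*k ≤ f (tk k) 0 + σ*(tk k/2) ∧
      f (tk k) 0 + σ*(tk k/2) < 4*r*k + 4*r := by
    intro k hk
    have h2 := (htk k hk).2
    have hle := Int.floor_le ((f (tk k) 0 + σ*(tk k/2))/(4*r))
    rw [h2] at hle
    have hlt := Int.lt_floor_add_one ((f (tk k) 0 + σ*(tk k/2))/(4*r))
    rw [h2] at hlt
    have hle' := (le_div_iff₀ h4r).1 hle
    have hlt' := (div_lt_iff₀ h4r).1 hlt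
    constructor <;> nlinarith
  -- membership in G
  have hmem : ∀ p ∈ E ×ˢ (Finset.univ : Finset (Fin (m+1) → Fin K)),
      phi m K tk f σ r p ∈ G := by
    rintro ⟨k, w⟩ hp
    rw [Finset.mem_product] at hp
    have hk := hp.1
    obtain ⟨ht1, ht2⟩ := htmem k hk
    rw [hG]
    simp only [Set.mem_iUnion, Set.mem_setOf_eq]
    refine ⟨tk k, htIoo k hk, ?_⟩
    have hwb : ∀ j : Fin (m+1), 0 ≤ 3*r*((w j : ℕ) : ℝ) ∧ 3*r*((w j : ℕ) : ℝ) ≤ tk k := by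
      intro j
      refine ⟨by positivity, ?_⟩
      have hwj : ((w j : ℕ) : ℝ) ≤ (K : ℝ) - 1 := by
        have h0 := (w j).isLt
        have : (w j : ℕ) ≤ K - 1 := by omega
        have h2 := (Nat.cast_le (α := ℝ)).2 this
        rwa [Nat.cast_sub hK1, Nat.cast_one] at h2
      have h1 : 3*r*((w j : ℕ) : ℝ) ≤ 3*r*((K:ℝ) - 1) :=
        mul_le_mul_of_nonneg_left hwj (by linarith)
      have h3rK : 3*r*(K:ℝ) ≤ 1/2 := by
        calc 3*r*(K:ℝ) ≤ 3*r*(1/(6*r)) := mul_le_mul_of_nonneg_left hKr (by linarith)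
        _ = 1/2 := by field_simp; ring
      nlinarith
    apply le_antisymm
    · apply (pi_norm_le_iff_of_nonneg (by linarith)).2
      intro i
      rw [Pi.sub_apply, Real.norm_eq_abs]
      rcases Fin.eq_zero_or_eq_succ i with hi | ⟨j, hj⟩
      · rw [hi, phi_zero]
        have heq : f (tk (k, w).1) 0 + σ * (tk (k, w).1 / 2) - f (tk k) 0 = σ * (tk k / 2) := by
          ring
        rw [heq, abs_mul, habs, one_mul, abs_of_nonneg (by linarith)]
      · rw [hj, phi_succ]
        obtain ⟨hw1, hw2⟩ := hwb j
        rw [abs_le]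
        constructor <;> simp only [] <;> nlinarith
    · have h0 := norm_le_pi_norm (phi m K tk f σ r (k, w) - f (tk k)) 0
      rw [Pi.sub_apply, phi_zero, Real.norm_eq_abs] at h0
      have heq : f (tk (k, w).1) 0 + σ * (tk (k, w).1 / 2) - f (tk k) 0 = σ * (tk k / 2) := by
        ring
      rw [heq, abs_mul, habs, one_mul, abs_of_nonneg (by linarith)] at h0
      exact h0
  -- separation
  have hsepφ : ∀ p ∈ E ×ˢ (Finset.univ : Finset (Fin (m+1) → Fin K)),
      ∀ q ∈ E ×ˢ (Finset.univ : Finset (Fin (m+1) → Fin K)), p ≠ q →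
      2 * r < dist (phi m K tk f σ r p) (phi m K tk f σ r q) := by
    rintro ⟨k, w⟩ hp ⟨k', w'⟩ hq hne
    rw [Finset.mem_product] at hp hq
    by_cases hkk : k = k'
    · subst hkk
      have hww : w ≠ w' := by
        intro h; exact hne (by rw [h])
      obtain ⟨j, hj⟩ := Function.ne_iff.1 hww
      have hd := dist_le_pi_dist (phi m K tk f σ r (k, w)) (phi m K tk f σ r (k, w')) j.succ
      rw [Real.dist_eq, phi_succ, phi_succ] at hd
      have hwj : (1:ℝ) ≤ |((w j : ℕ) : ℝ) - ((w' j : ℕ) : ℝ)| := by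
        have hne2 : ((w j : ℕ) : ℤ) ≠ ((w' j : ℕ) : ℤ) := by
          intro h
          exact hj (Fin.ext (by exact_mod_cast h))
        have h2 : (1:ℤ) ≤ |((w j : ℕ) : ℤ) - ((w' j : ℕ) : ℤ)| :=
          Int.one_le_abs (sub_ne_zero.2 hne2)
        have h3 : ((1:ℤ):ℝ) ≤ ((|((w j : ℕ) : ℤ) - ((w' j : ℕ) : ℤ)| : ℤ) : ℝ) := by
          exact_mod_cast h2
        rw [Int.cast_abs] at h3
        push_cast at h3 ⊢
        exact h3
      have hkey : 3*r ≤ |f (tk (k,w).1) j.succ - tk (k,w).1/2 + 3*r*(((k,w).2 j : ℕ) : ℝ)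
          - (f (tk (k,w').1) j.succ - tk (k,w').1/2 + 3*r*(((k,w').2 j : ℕ) : ℝ))| := by
        have heq : f (tk (k,w).1) j.succ - tk (k,w).1/2 + 3*r*(((k,w).2 j : ℕ) : ℝ)
            - (f (tk (k,w').1) j.succ - tk (k,w').1/2 + 3*r*(((k,w').2 j : ℕ) : ℝ))
            = 3*r*(((w j : ℕ) : ℝ) - ((w' j : ℕ) : ℝ)) := by ring
        rw [heq, abs_mul, abs_of_nonneg (show (0:ℝ) ≤ 3*r by linarith)]
        nlinarith
      linarith
    · have hk := hp.1; have hk' := hq.1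
      have hsep2 := hsep k hk k' hk' hkk
      have hd := dist_le_pi_dist (phi m K tk f σ r (k, w)) (phi m K tk f σ r (k', w')) 0
      rw [Real.dist_eq, phi_zero, phi_zero] at hd
      obtain ⟨ha1, ha2⟩ := hheight k hk
      obtain ⟨hb1, hb2⟩ := hheight k' hk'
      have hsepR : (2:ℝ) ≤ |(k:ℝ) - (k':ℝ)| := by
        have h3 : ((2:ℤ):ℝ) ≤ ((|k - k'| : ℤ) : ℝ) := by exact_mod_cast hsep2
        rw [Int.cast_abs] at h3
        push_cast at h3 ⊢
        exact h3
      have hgap : 4*r < |f (tk (k,w).1) 0 + σ*(tk (k,w).1/2)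
          - (f (tk (k',w').1) 0 + σ*(tk (k',w').1/2))| := by
        simp only []
        rcases abs_cases ((k:ℝ) - (k':ℝ)) with ⟨he, -⟩ | ⟨he, -⟩
        · -- k - k' ≥ 2
          have h2 : (k':ℝ) + 2 ≤ k := by rw [he] at hsepR; linarith
          have hlow : 4*r < f (tk k) 0 + σ*(tk k/2) - (f (tk k') 0 + σ*(tk k'/2)) := by
            nlinarith
          calc 4*r < f (tk k) 0 + σ*(tk k/2) - (f (tk k') 0 + σ*(tk k'/2)) := hlow
          _ ≤ |f (tk k) 0 + σ*(tk k/2) - (f (tk k') 0 + σ*(tk k'/2))| := le_abs_self _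
        · -- k' - k ≥ 2
          have h2 : (k:ℝ) + 2 ≤ k' := by rw [he] at hsepR; linarith
          have hlow : 4*r < (f (tk k') 0 + σ*(tk k'/2)) - (f (tk k) 0 + σ*(tk k/2)) := by
            nlinarith
          calc 4*r < (f (tk k') 0 + σ*(tk k'/2)) - (f (tk k) 0 + σ*(tk k/2)) := hlow
          _ ≤ |(f (tk k') 0 + σ*(tk k'/2)) - (f (tk k) 0 + σ*(tk k/2))| := le_abs_self _
          _ = |f (tk k) 0 + σ*(tk k/2) - (f (tk k') 0 + σ*(tk k'/2))| := abs_sub_comm _ _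
      linarith
  -- conclude
  have hinj : Set.InjOn (phi m K tk f σ r)
      ((E ×ˢ (Finset.univ : Finset (Fin (m+1) → Fin K)) : Finset _) : Set _) := by
    intro p hp q hq hpq
    rw [Finset.mem_coe] at hp hq
    by_contra hne
    have h1 := hsepφ p hp q hq hne
    rw [hpq, dist_self] at h1
    linarith
  have hcard : ((E ×ˢ (Finset.univ : Finset (Fin (m+1) → Fin K))).image
      (phi m K tk f σ r)).card = E.card * K^(m+1) := by
    rw [Finset.card_image_of_injOn hinj, Finset.card_product, Finset.card_univ,
      Fintype.card_fun, Fintype.card_fin, Fintype.card_fin]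
  have hfin := pack_le_coverNum ((E ×ˢ (Finset.univ : Finset (Fin (m+1) → Fin K))).image
      (phi m K tk f σ r))
    (by
      intro p hp
      obtain ⟨q, hq, rfl⟩ := Finset.mem_image.1 hp
      exact hmem q hq)
    (by
      intro p hp q hq hne
      obtain ⟨p', hp', rfl⟩ := Finset.mem_image.1 hp
      obtain ⟨q', hq', rfl⟩ := Finset.mem_image.1 hq
      have hne' : p' ≠ q' := fun h => hne (by rw [h])
      exact hsepφ p' hp' q' hq' hne')
    (G_cover_exists (m+2) f hf hr)
  rw [hcard] at hfin
  exact hfin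

set_option maxHeartbeats 1000000 in
lemma core (m : ℕ) (f : ℝ → (Fin (m+2) → ℝ))
    (hf : ∀ t ∈ Set.Ioo (0:ℝ) 1, ∀ i, f t i ∈ Set.Icc (0:ℝ) 1)
    {r : ℝ} (hr : 0 < r) (hr' : r ≤ 1/100) :
    (1/12:ℝ)^(m+2) * (1/r) ^ (((m+2:ℕ):ℝ) - 1/2) ≤
      (coverNum (⋃ t ∈ Set.Ioo (0:ℝ) 1, {y : Fin (m+2) → ℝ | ‖y - f t‖ = t / 2}) r : ℝ) := by
  classical
  have h1r : (0:ℝ) < 1/r := by positivity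
  set X : ℝ := (1/r) ^ ((1:ℝ)/2) with hX
  have hX0 : 0 < X := Real.rpow_pos_of_pos h1r _
  -- step: main2
  have main2 : ∀ (σ : ℝ), (σ = 1 ∨ σ = -1) → ∀ E : Finset ℤ,
      (∀ k ∈ E, ∀ k' ∈ E, k ≠ k' → 2 ≤ |k - k'|) →
      (∀ k ∈ E, ∃ t : ℝ, t ∈ Set.Icc (1/2:ℝ) (1 - 4*r) ∧
        ⌊(f t 0 + σ*(t/2))/(4*r)⌋ = k) →
      ((1/8:ℝ) * X ≤ E.card) →
      (1/12:ℝ)^(m+2) * (1/r) ^ (((m+2:ℕ):ℝ) - 1/2) ≤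
        (coverNum (⋃ t ∈ Set.Ioo (0:ℝ) 1, {y : Fin (m+2) → ℝ | ‖y - f t‖ = t / 2}) r : ℝ) := by
    intro σ hσ E hsep hocc hcard
    have hfp := face_pack m f hf hr hr' hσ E hsep hocc
    set K := ⌊1/(6*r)⌋₊ with hKdef
    have hKlb : 1/(12*r) ≤ (K:ℝ) := by
      have h1 : 1/(6*r) < (K:ℝ) + 1 := by
        have := Nat.lt_floor_add_one (1/(6*r))
        push_cast at this ⊢
        linarith
      have h2 : (1:ℝ) ≤ 1/(12*r) := by
        rw [le_div_iff₀ (by linarith)]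
        linarith
      have h3 : 1/(6*r) = 2 * (1/(12*r)) := by field_simp; ring
      linarith
    have hKpos : (0:ℝ) < 1/(12*r) := by positivity
    have hrw : (1/r) ^ (((m+2:ℕ):ℝ) - 1/2) = (1/r)^(m+1) * X := by
      have he : (((m+2:ℕ):ℝ) - 1/2) = ((m+1:ℕ):ℝ) + (1:ℝ)/2 := by push_cast; ring
      rw [he, Real.rpow_add h1r, Real.rpow_natCast, hX]
    rw [hrw]
    have hchain : (1/12:ℝ)^(m+2) * ((1/r)^(m+1) * X) ≤ (E.card : ℝ) * (K:ℝ)^(m+1) := by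
      have hKp : (1/(12*r))^(m+1) ≤ (K:ℝ)^(m+1) := pow_le_pow_left₀ hKpos.le hKlb _
      have hsplit : ((1:ℝ)/(12*r))^(m+1) = (1/12)^(m+1) * (1/r)^(m+1) := by
        rw [← mul_pow]
        congr 1
        field_simp
      calc (1/12:ℝ)^(m+2) * ((1/r)^(m+1) * X)
          = ((1/8) * X) * ((1/12)^(m+1) * (1/r)^(m+1)) * ((1/12)^(m+2) / ((1/8) * (1/12)^(m+1))) := by
            field_simp
      _ ≤ ((1/8) * X) * ((1/12)^(m+1) * (1/r)^(m+1)) * 1 := by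
            apply mul_le_mul_of_nonneg_left _ (by positivity)
            rw [div_le_one (by positivity), pow_succ]
            nlinarith [pow_pos (show (0:ℝ) < 1/12 by norm_num) (m+1)]
      _ = ((1/8) * X) * (1/(12*r))^(m+1) := by rw [hsplit]; ring
      _ ≤ (E.card : ℝ) * (K:ℝ)^(m+1) := by
            apply mul_le_mul hcard hKp (by positivity)
            exact le_trans (by positivity) hcard
    calc (1/12:ℝ)^(m+2) * ((1/r)^(m+1) * X) ≤ (E.card : ℝ) * (K:ℝ)^(m+1) := hchain
    _ = ((E.card * K^(m+1) : ℕ) : ℝ) := by push_cast; ring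
    _ ≤ _ := by exact_mod_cast hfp
  -- step: main1 (parity split)
  have main1 : ∀ (σ : ℝ), (σ = 1 ∨ σ = -1) → ∀ C : Finset ℤ,
      (∀ k ∈ C, ∃ t : ℝ, t ∈ Set.Icc (1/2:ℝ) (1 - 4*r) ∧
        ⌊(f t 0 + σ*(t/2))/(4*r)⌋ = k) →
      ((1/4:ℝ) * X ≤ C.card) →
      (1/12:ℝ)^(m+2) * (1/r) ^ (((m+2:ℕ):ℝ) - 1/2) ≤
        (coverNum (⋃ t ∈ Set.Ioo (0:ℝ) 1, {y : Fin (m+2) → ℝ | ‖y - f t‖ = t / 2}) r : ℝ) := by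
    intro σ hσ C hocc hcard
    have hsplit := Finset.card_filter_add_card_filter_not
      (s := C) (p := fun k => Even k)
    rcases le_total (Finset.filter (fun k => ¬ Even k) C).card
      (Finset.filter (fun k => Even k) C).card with hle | hle
    · apply main2 σ hσ (Finset.filter (fun k => Even k) C)
      · intro k hk k' hk' hne
        have h1 := (Finset.mem_filter.1 hk).2
        have h2 := (Finset.mem_filter.1 hk').2
        obtain ⟨a, ha⟩ := h1
        obtain ⟨b, hb⟩ := h2
        rw [le_abs]
        omega
      · intro k hk
        exact hocc k (Finset.mem_filter.1 hk).1
      · have : (C.card : ℝ) ≤ 2 * (Finset.filter (fun k => Even k) C).card := by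
          have := hsplit
          have hle' : ((Finset.filter (fun k => ¬ Even k) C).card : ℝ)
              ≤ (Finset.filter (fun k => Even k) C).card := by exact_mod_cast hle
          have heq : ((Finset.filter (fun k => Even k) C).card : ℝ)
              + ((Finset.filter (fun k => ¬ Even k) C).card : ℝ) = (C.card : ℝ) := by
            exact_mod_cast this
          linarith
        linarith
    · apply main2 σ hσ (Finset.filter (fun k => ¬ Even k) C)
      · intro k hk k' hk' hne
        have h1 := (Finset.mem_filter.1 hk).2
        have h2 := (Finset.mem_filter.1 hk').2
        rw [Int.not_even_iff_odd] at h1 h2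
        obtain ⟨a, ha⟩ := h1
        obtain ⟨b, hb⟩ := h2
        rw [le_abs]
        omega
      · intro k hk
        exact hocc k (Finset.mem_filter.1 hk).1
      · have : (C.card : ℝ) ≤ 2 * (Finset.filter (fun k => ¬ Even k) C).card := by
          have hle' : ((Finset.filter (fun k => Even k) C).card : ℝ)
              ≤ ((Finset.filter (fun k => ¬ Even k) C).card : ℝ) := by exact_mod_cast hle
          have heq : ((Finset.filter (fun k => Even k) C).card : ℝ)
              + ((Finset.filter (fun k => ¬ Even k) C).card : ℝ) = (C.card : ℝ) := by
            exact_mod_cast hsplit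
          linarith
        linarith
  -- bucket counting
  set M₁ : ℤ := ⌈1/(8*r)⌉ with hM1
  set M₂ : ℤ := ⌊(1-4*r)/(4*r)⌋ with hM2
  set D : Finset ℤ := Finset.Icc M₁ M₂ with hD
  have h4r : (0:ℝ) < 4*r := by linarith
  have hw : (25/2 : ℝ) ≤ 1/(8*r) := by
    rw [le_div_iff₀ (by linarith)]
    linarith
  have htmem : ∀ p ∈ D, (4*r*p : ℝ) ∈ Set.Icc (1/2:ℝ) (1 - 4*r) := by
    intro p hp
    rw [hD, Finset.mem_Icc] at hp
    obtain ⟨hp1, hp2⟩ := hp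
    have hc1 : (M₁ : ℝ) ≤ p := by exact_mod_cast hp1
    have hc2 : (p : ℝ) ≤ M₂ := by exact_mod_cast hp2
    have hceil : 1/(8*r) ≤ (M₁:ℝ) := Int.le_ceil _
    have hfloor : (M₂:ℝ) ≤ (1-4*r)/(4*r) := Int.floor_le _
    constructor
    · have : 1/(8*r) ≤ (p:ℝ) := by linarith
      rw [div_le_iff₀ (by linarith)] at this
      linarith
    · have : (p:ℝ) ≤ (1-4*r)/(4*r) := by linarith
      rw [le_div_iff₀ h4r] at this
      linarith
  have hDcard : 1/(16*r) ≤ (D.card : ℝ) := by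
    have hcc : D.card = (M₂ + 1 - M₁).toNat := by rw [hD, Int.card_Icc]
    have h1 : (M₁:ℝ) < 1/(8*r) + 1 := Int.ceil_lt_add_one _
    have h2 : (1-4*r)/(4*r) - 1 < (M₂:ℝ) := by
      have := Int.lt_floor_add_one ((1-4*r)/(4*r))
      linarith
    have he1 : (1-4*r)/(4*r) = 2 * (1/(8*r)) - 1 := by field_simp; ring
    have he2 : 1/(16*r) = (1/(8*r))/2 := by field_simp; ring
    have h3 : 1/(16*r) ≤ ((M₂ + 1 - M₁ : ℤ) : ℝ) := by
      push_cast
      rw [he2]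
      rw [he1] at h2
      linarith
    have h4 : ((M₂ + 1 - M₁ : ℤ) : ℝ) ≤ ((M₂ + 1 - M₁).toNat : ℝ) := by
      exact_mod_cast Int.self_le_toNat _
    rw [hcc]
    linarith
  -- the two bucket maps
  set g : ℤ → ℤ × ℤ := fun p =>
    (⌊(f (4*r*p) 0 + 1*((4*r*p)/2))/(4*r)⌋, ⌊(f (4*r*p) 0 + (-1)*((4*r*p)/2))/(4*r)⌋) with hg
  have hkey : ∀ p : ℤ, (g p).1 - (g p).2 = p := by
    intro p
    have hu1 := Int.floor_le ((f (4*r*p) 0 + 1*((4*r*p)/2))/(4*r))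
    have hu2 := Int.lt_floor_add_one ((f (4*r*p) 0 + 1*((4*r*p)/2))/(4*r))
    have hv1 := Int.floor_le ((f (4*r*p) 0 + (-1)*((4*r*p)/2))/(4*r))
    have hv2 := Int.lt_floor_add_one ((f (4*r*p) 0 + (-1)*((4*r*p)/2))/(4*r))
    have hdiff : (f (4*r*p) 0 + 1*((4*r*p)/2))/(4*r) - (f (4*r*p) 0 + (-1)*((4*r*p)/2))/(4*r)
        = (p : ℝ) := by
      field_simp
      ring
    have hb1 : ((g p).1 - (g p).2 : ℝ) - 1 < (p:ℝ) := by
      rw [hg]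
      push_cast
      linarith
    have hb2 : (p:ℝ) < ((g p).1 - (g p).2 : ℝ) + 1 := by
      rw [hg]
      push_cast
      linarith
    have hi1 : (g p).1 - (g p).2 - 1 < p := by exact_mod_cast hb1
    have hi2 : p < (g p).1 - (g p).2 + 1 := by exact_mod_cast hb2
    omega
  set A : Finset ℤ := D.image (fun p => (g p).1) with hA
  set B : Finset ℤ := D.image (fun p => (g p).2) with hB
  have hDAB : D.card ≤ A.card * B.card := by
    rw [← Finset.card_product]
    apply Finset.card_le_card_of_injOn g
    · intro p hp
      rw [Finset.mem_coe, Finset.mem_product]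
      exact ⟨Finset.mem_image_of_mem _ hp, Finset.mem_image_of_mem _ hp⟩
    · intro p hp q hq hpq
      have := hkey p
      rw [hpq, hkey q] at this
      exact this.symm
  -- max of the two cards
  have hsqrt : Real.sqrt (1/(16*r)) = (1/4) * X := by
    have h116 : (1/(16*r) : ℝ) = (1/16) * (1/r) := by field_simp
    rw [h116, Real.sqrt_mul (by norm_num) (1/r)]
    rw [show (1/16:ℝ) = (1/4)^2 by norm_num, Real.sqrt_sq (by norm_num)]
    rw [hX, Real.sqrt_eq_rpow]
  rcases le_total A.card B.card with hAB | hAB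
  · -- B is large, use σ = -1
    apply main1 (-1) (Or.inr rfl) B
    · intro k hk
      rw [hB] at hk
      obtain ⟨p, hp, hpk⟩ := Finset.mem_image.1 hk
      exact ⟨4*r*p, htmem p hp, hpk⟩
    · have hBsq : 1/(16*r) ≤ ((B.card : ℝ))^2 := by
        have h1 : (D.card : ℝ) ≤ (A.card : ℝ) * B.card := by exact_mod_cast hDAB
        have h2 : (A.card : ℝ) ≤ B.card := by exact_mod_cast hAB
        nlinarith [hDcard, Nat.cast_nonneg (α := ℝ) A.card, Nat.cast_nonneg (α := ℝ) B.card]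
      calc (1/4:ℝ) * X = Real.sqrt (1/(16*r)) := hsqrt.symm
      _ ≤ Real.sqrt (((B.card : ℝ))^2) := Real.sqrt_le_sqrt hBsq
      _ = (B.card : ℝ) := Real.sqrt_sq (Nat.cast_nonneg _)
  · -- A is large, use σ = 1
    apply main1 1 (Or.inl rfl) A
    · intro k hk
      rw [hA] at hk
      obtain ⟨p, hp, hpk⟩ := Finset.mem_image.1 hk
      exact ⟨4*r*p, htmem p hp, hpk⟩
    · have hAsq : 1/(16*r) ≤ ((A.card : ℝ))^2 := by
        have h1 : (D.card : ℝ) ≤ (A.card : ℝ) * B.card := by exact_mod_cast hDAB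
        have h2 : (B.card : ℝ) ≤ A.card := by exact_mod_cast hAB
        nlinarith [hDcard, Nat.cast_nonneg (α := ℝ) A.card, Nat.cast_nonneg (α := ℝ) B.card]
      calc (1/4:ℝ) * X = Real.sqrt (1/(16*r)) := hsqrt.symm
      _ ≤ Real.sqrt (((A.card : ℝ))^2) := Real.sqrt_le_sqrt hAsq
      _ = (A.card : ℝ) := Real.sqrt_sq (Nat.cast_nonneg _)

set_option maxHeartbeats 1000000 in
/-- Any set containing boundaries of axis-aligned cubes of all side
lengths in `(0,1)` has Assouad dimension at least `n - 1/2`. -/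
theorem cube_packing_assouadDim_ge (n : ℕ) (hn : 2 ≤ n) (f : ℝ → (Fin n → ℝ))
    (hf : ∀ t ∈ Set.Ioo (0:ℝ) 1, ∀ i, f t i ∈ Set.Icc (0:ℝ) 1) :
    (n : ℝ) - 1/2 ≤
      assouadDim (⋃ t ∈ Set.Ioo (0:ℝ) 1, {y : Fin n → ℝ | ‖y - f t‖ = t / 2}) := by
  obtain ⟨m, rfl⟩ : ∃ m, n = m + 2 := ⟨n - 2, by omega⟩
  set G := ⋃ t ∈ Set.Ioo (0:ℝ) 1, {y : Fin (m+2) → ℝ | ‖y - f t‖ = t / 2} with hG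
  -- base point
  have hx0ex : ∃ x0, x0 ∈ G := by
    refine ⟨fun i => f (1/2) i + 1/4, ?_⟩
    rw [hG]
    simp only [Set.mem_iUnion, Set.mem_setOf_eq]
    refine ⟨1/2, by norm_num, ?_⟩
    have hconst : (fun i => f (1/2) i + 1/4) - f (1/2) = fun (_ : Fin (m+2)) => (1/4:ℝ) := by
      funext i; simp
    rw [hconst]
    have hle : ‖(fun _ => (1/4:ℝ) : Fin (m+2) → ℝ)‖ ≤ (1/2)/2 := by
      apply (pi_norm_le_iff_of_nonneg (by norm_num)).2
      intro i
      rw [Real.norm_eq_abs, abs_of_nonneg (by norm_num : (0:ℝ) ≤ 1/4)]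
      norm_num
    have hge := norm_le_pi_norm (fun _ => (1/4:ℝ) : Fin (m+2) → ℝ) 0
    rw [Real.norm_eq_abs] at hge
    have h14 : |(1/4:ℝ)| = 1/4 := by norm_num
    rw [h14] at hge
    have h24 : ((1:ℝ)/2)/2 = 1/4 := by norm_num
    rw [h24] at hle ⊢
    linarith
  obtain ⟨x0, hx0G⟩ := hx0ex
  have hGball : G ⊆ closedBall x0 2 := by
    intro y hy
    rw [mem_closedBall, dist_pi_le_iff (by norm_num)]
    intro i
    have h1 := mem_G_bounds (m+2) f hf y hy i
    have h2 := mem_G_bounds (m+2) f hf x0 hx0G i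
    rw [Set.mem_Icc] at h1 h2
    obtain ⟨h1a, h1b⟩ := h1
    obtain ⟨h2a, h2b⟩ := h2
    rw [Real.dist_eq, abs_le]
    constructor <;> linarith
  rw [assouadDim]
  apply le_csInf
  · -- nonempty: witness s = m + 2
    refine ⟨((m+2:ℕ):ℝ), by positivity, 2^(m+2), by positivity, ?_⟩
    intro x hx R hR r hr hrR
    obtain ⟨s, hs, hcard⟩ := cube_cover (m+2) x hr hR
    have h1 : coverNum (G ∩ closedBall x R) r ≤ s.card :=
      coverNum_le_card (Set.inter_subset_right.trans hs)
    have hRr : (1:ℝ) ≤ R/r := (one_le_div hr).2 hrR.le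
    calc (coverNum (G ∩ closedBall x R) r : ℝ) ≤ s.card := by exact_mod_cast h1
    _ ≤ (R/r + 1)^(m+2) := hcard
    _ ≤ (2*(R/r))^(m+2) := by
        apply pow_le_pow_left₀ (by linarith) (by linarith)
    _ = 2^(m+2) * (R/r)^(m+2) := by rw [mul_pow]
    _ = 2^(m+2) * (R/r) ^ (((m+2:ℕ):ℝ)) := by rw [Real.rpow_natCast]
  · -- lower bound
    intro s hs
    obtain ⟨hs0, C, hC, hprop⟩ := hs
    by_contra hcon
    push_neg at hcon
    set δ : ℝ := ((m+2:ℕ):ℝ) - 1/2 - s with hδdef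
    have hδ : 0 < δ := by
      rw [hδdef]
      push_cast at hcon ⊢
      linarith
    set c : ℝ := (1/12:ℝ)^(m+2) with hc
    have hc0 : 0 < c := by positivity
    set A : ℝ := C * 2^s / c with hA
    have hA0 : 0 < A := by
      apply div_pos _ hc0
      exact mul_pos hC (Real.rpow_pos_of_pos (by norm_num) s)
    set B0 : ℝ := (1/(A+1)) ^ ((1:ℝ)/δ) with hB0
    have hB00 : 0 < B0 := Real.rpow_pos_of_pos (by positivity) _
    set r : ℝ := min (1/100) B0 with hrdef
    have hr0 : 0 < r := lt_min (by norm_num) hB00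
    have hr1 : r ≤ 1/100 := min_le_left _ _
    have h1r : (0:ℝ) < 1/r := by positivity
    have hrδ : r ^ δ ≤ 1/(A+1) := by
      calc r ^ δ ≤ B0 ^ δ := Real.rpow_le_rpow hr0.le (min_le_right _ _) hδ.le
      _ = 1/(A+1) := by
          rw [hB0, ← Real.rpow_mul (by positivity), one_div_mul_cancel hδ.ne', Real.rpow_one]
    have hcover := hprop x0 hx0G 2 (by norm_num) r hr0 (lt_of_le_of_lt hr1 (by norm_num))
    rw [Set.inter_eq_left.2 hGball] at hcover
    have hlow := core m f hf hr0 hr1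
    rw [← hG] at hlow
    -- rewrite exponents
    have hsum : (((m+2:ℕ)):ℝ) - 1/2 = s + δ := by rw [hδdef]; ring
    rw [hsum, Real.rpow_add h1r, ← hc] at hlow
    have h2r : (2/r : ℝ)^s = 2^s * (1/r)^s := by
      rw [show (2/r:ℝ) = 2*(1/r) by ring, Real.mul_rpow (by norm_num) (by positivity)]
    rw [h2r] at hcover
    set u : ℝ := (1/r)^s with hu
    set v : ℝ := (1/r)^δ with hv
    set w : ℝ := r^δ with hw
    have hu0 : 0 < u := Real.rpow_pos_of_pos h1r _
    have hv0 : 0 < v := Real.rpow_pos_of_pos h1r _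
    have hw0 : 0 < w := Real.rpow_pos_of_pos hr0 _
    have hvw : v * w = 1 := by
      rw [hv, hw, ← Real.mul_rpow (by positivity) hr0.le, one_div_mul_cancel hr0.ne',
        Real.one_rpow]
    have hchain : c * (u * v) ≤ C * (2^s * u) := le_trans hlow hcover
    have h2 : c * v ≤ C * 2^s := by
      have := hchain
      have h3 : (c * v) * u ≤ (C * 2^s) * u := by nlinarith
      exact le_of_mul_le_mul_right h3 hu0
    have h4 : c ≤ C * 2^s * w := by
      have h5 : (c * v) * w ≤ (C * 2^s) * w := by nlinarith
      calc c = c * (v * w) := by rw [hvw]; ring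
      _ = (c * v) * w := by ring
      _ ≤ (C * 2^s) * w := h5
    have h6 : c ≤ C * 2^s * (1/(A+1)) := by
      calc c ≤ C * 2^s * w := h4
      _ ≤ C * 2^s * (1/(A+1)) := by
          apply mul_le_mul_of_nonneg_left hrδ
          positivity
    have hAc : A * c = C * 2^s := by
      rw [hA]; field_simp
    have h7 : c * (A + 1) ≤ A * c := by
      have hA1 : (0:ℝ) < A + 1 := by linarith
      rw [hAc]
      calc c * (A+1) ≤ (C * 2^s * (1/(A+1))) * (A+1) := by
            apply mul_le_mul_of_nonneg_right h6 hA1.le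
      _ = C * 2^s := by field_simp
    nlinarith
end

section
/- Fix δ ∈ (0, 1/200) and let r_1 < r_2 < ⋯ < r_k be points in [1/2, 1] with r_{i+1} − r_i ≥ 100δ for all i. Suppose C_1, …, C_k ⊆ ℝ^2 where C_i is the boundary of an axis-aligned square of side length r_i. If M is a positive integer such that some point of ℝ^2 lies in the closed δ-neighborhoods of the right sides of at least M of the squares C_i, then the Lebesgue measure of the δ-neighborhood of ⋃_i C_i is at least (M/2)·δ. -/
open Set Metric MeasureTheory Filter Topology
open scoped ENNReal

/-- If among `100δ`-separated side lengths `r 1 < … < r k` in `[1/2,1]`,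
some point of the plane lies in the closed `δ`-neighbourhoods of the right sides of at
least `M` of the corresponding square boundaries, then the `δ`-neighbourhood of the union
of the square boundaries has area at least `(M/2)·δ`. -/
theorem squares_thickening_volume_ge (δ : ℝ) (hδ : δ ∈ Set.Ioo (0:ℝ) (1/200))
    (k : ℕ) (r : Fin k → ℝ) (c : Fin k → ℝ × ℝ)
    (hr : ∀ i, r i ∈ Set.Icc (1/2 : ℝ) 1)
    (hsep : ∀ i j : Fin k, i < j → r i + 100 * δ ≤ r j)
    (M : ℕ) (hM : 0 < M)
    (hpt : ∃ p : ℝ × ℝ, M ≤ {i : Fin k |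
        p ∈ cthickening δ
          ({(c i).1 + r i / 2} ×ˢ Set.Icc ((c i).2 - r i / 2) ((c i).2 + r i / 2))}.ncard) :
    ENNReal.ofReal ((M / 2 : ℝ) * δ) ≤
      volume (cthickening δ (⋃ i, {y : ℝ × ℝ | ‖y - c i‖ = r i / 2})) := by
  classical
  obtain ⟨hδ0, hδ1⟩ := hδ
  obtain ⟨p, hp⟩ := hpt
  set S : Set (Fin k) := {i : Fin k |
        p ∈ cthickening δ
          ({(c i).1 + r i / 2} ×ˢ Set.Icc ((c i).2 - r i / 2) ((c i).2 + r i / 2))} with hS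
  have hSfin : S.Finite := Set.toFinite S
  set s : Finset (Fin k) := hSfin.toFinset with hs
  have hcard : M ≤ s.card := by
    rwa [Set.ncard_eq_toFinset_card S hSfin] at hp
  -- x-coordinate estimate: for i ∈ s, |p.1 - ((c i).1 + r i / 2)| ≤ δ
  have hx : ∀ i ∈ s, |p.1 - ((c i).1 + r i / 2)| ≤ δ := by
    intro i hi
    have hiS : p ∈ cthickening δ
        ({(c i).1 + r i / 2} ×ˢ Set.Icc ((c i).2 - r i / 2) ((c i).2 + r i / 2)) :=
      hSfin.mem_toFinset.mp hi
    have hr2 : (0:ℝ) ≤ r i / 2 := by have := (hr i).1; linarith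
    have hE : (({(c i).1 + r i / 2} ×ˢ Set.Icc ((c i).2 - r i / 2) ((c i).2 + r i / 2)) :
        Set (ℝ × ℝ)).Nonempty := by
      refine ⟨((c i).1 + r i / 2, (c i).2), rfl, ?_⟩
      constructor <;> linarith
    have hcomp : IsCompact (({(c i).1 + r i / 2} ×ˢ
        Set.Icc ((c i).2 - r i / 2) ((c i).2 + r i / 2)) : Set (ℝ × ℝ)) :=
      isCompact_singleton.prod isCompact_Icc
    have hdist : infDist p (({(c i).1 + r i / 2} ×ˢ
        Set.Icc ((c i).2 - r i / 2) ((c i).2 + r i / 2)) : Set (ℝ × ℝ)) ≤ δ := by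
      have h := mem_cthickening_iff.mp hiS
      have h2 := ENNReal.toReal_mono ENNReal.ofReal_ne_top h
      rwa [ENNReal.toReal_ofReal hδ0.le] at h2
    obtain ⟨y, hy, hyd⟩ := hcomp.exists_infDist_eq_dist hE p
    have hdy : dist p y ≤ δ := by rw [← hyd]; exact hdist
    have h1 : dist p.1 y.1 ≤ δ := le_trans (by rw [Prod.dist_eq]; exact le_max_left _ _) hdy
    have hy1 : y.1 = (c i).1 + r i / 2 := hy.1
    rw [Real.dist_eq, hy1] at h1
    exact h1
  -- the disjoint rectangles around left sides
  set A : Fin k → Set (ℝ × ℝ) := fun i =>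
    Set.Icc ((c i).1 - r i / 2 - δ) ((c i).1 - r i / 2 + δ) ×ˢ
      Set.Icc ((c i).2 - r i / 2 - δ) ((c i).2 + r i / 2 + δ) with hA
  -- each A i lies in the thickening
  have hsub : ∀ i, A i ⊆ cthickening δ (⋃ j, {y : ℝ × ℝ | ‖y - c j‖ = r j / 2}) := by
    intro i q hq
    obtain ⟨hq1, hq2⟩ := hq
    have hr2 : (1/2:ℝ) ≤ r i := (hr i).1
    set y2 : ℝ := max ((c i).2 - r i / 2) (min q.2 ((c i).2 + r i / 2)) with hy2
    have hy2a : (c i).2 - r i / 2 ≤ y2 := le_max_left _ _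
    have hy2b : y2 ≤ (c i).2 + r i / 2 := by
      apply max_le (by linarith) (min_le_right _ _)
    have hy2c : |q.2 - y2| ≤ δ := by
      rw [abs_le]
      rcases le_total q.2 ((c i).2 + r i / 2) with h | h
      · rcases le_total q.2 ((c i).2 - r i / 2) with h' | h'
        · have : y2 = (c i).2 - r i / 2 := by
            rw [hy2, max_eq_left (min_le_of_left_le h')]
          rw [this]
          constructor <;> [linarith [hq2.1]; linarith]
        · have : y2 = q.2 := by rw [hy2, min_eq_left h, max_eq_right h']
          rw [this]; constructor <;> linarith
      · have : y2 = (c i).2 + r i / 2 := by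
          rw [hy2, min_eq_right h, max_eq_right (by linarith)]
        rw [this]
        constructor <;> [linarith; linarith [hq2.2]]
    have hymem : ((c i).1 - r i / 2, y2) ∈ ⋃ j, {z : ℝ × ℝ | ‖z - c j‖ = r j / 2} := by
      refine Set.mem_iUnion.mpr ⟨i, ?_⟩
      show ‖((c i).1 - r i / 2, y2) - c i‖ = r i / 2
      have hdiff : ((c i).1 - r i / 2, y2) - c i = (-(r i / 2), y2 - (c i).2) := by
        ext <;> simp <;> ring
      rw [hdiff, Prod.norm_def]
      simp only [norm_neg, Real.norm_eq_abs]
      rw [abs_of_nonneg (by linarith : (0:ℝ) ≤ r i / 2)]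
      have h2 : |y2 - (c i).2| ≤ r i / 2 := by rw [abs_le]; constructor <;> linarith
      exact max_eq_left h2
    refine mem_cthickening_of_dist_le q ((c i).1 - r i / 2, y2) δ _ hymem ?_
    rw [Prod.dist_eq]
    apply max_le
    · rw [Real.dist_eq, abs_le]
      exact ⟨by linarith [hq1.1], by linarith [hq1.2]⟩
    · rw [Real.dist_eq]; exact hy2c
  -- pairwise disjoint on s
  have hdisj : (↑s : Set (Fin k)).PairwiseDisjoint A := by
    intro i hi j hj hij
    simp only [Function.onFun]
    rw [Set.disjoint_left]
    intro q hqi hqj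
    have h1 := hx i (by simpa using hi)
    have h2 := hx j (by simpa using hj)
    have hq1i := hqi.1
    have hq1j := hqj.1
    rw [abs_le] at h1 h2
    have hi1 := hq1i.1; have hi2 := hq1i.2
    have hj1 := hq1j.1; have hj2 := hq1j.2
    rcases lt_or_gt_of_ne hij with h | h
    · have := hsep i j h; linarith
    · have := hsep j i h; linarith
  -- measure of each A i
  have hmeas : ∀ i, MeasurableSet (A i) := fun i =>
    measurableSet_Icc.prod measurableSet_Icc
  have hvol : ∀ i, ENNReal.ofReal δ ≤ volume (A i) := by
    intro i
    have hr2 : (1/2:ℝ) ≤ r i := (hr i).1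
    rw [hA]
    simp only
    rw [show (volume : Measure (ℝ × ℝ)) = (volume : Measure ℝ).prod volume from
      Measure.volume_eq_prod ℝ ℝ, Measure.prod_prod, Real.volume_Icc, Real.volume_Icc]
    have e1 : (c i).1 - r i / 2 + δ - ((c i).1 - r i / 2 - δ) = 2 * δ := by ring
    have e2 : (c i).2 + r i / 2 + δ - ((c i).2 - r i / 2 - δ) = r i + 2 * δ := by ring
    rw [e1, e2, ← ENNReal.ofReal_mul (by linarith)]
    apply ENNReal.ofReal_le_ofReal
    nlinarith
  -- put it together
  calc ENNReal.ofReal ((M / 2 : ℝ) * δ)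
      ≤ ENNReal.ofReal ((M : ℝ) * δ) := by
        apply ENNReal.ofReal_le_ofReal
        have : (0:ℝ) ≤ (M:ℝ) := Nat.cast_nonneg M
        nlinarith
    _ = (M : ℝ≥0∞) * ENNReal.ofReal δ := by
        rw [ENNReal.ofReal_mul (Nat.cast_nonneg M), ENNReal.ofReal_natCast]
    _ ≤ (s.card : ℝ≥0∞) * ENNReal.ofReal δ := by
        exact mul_le_mul_left (by exact_mod_cast hcard) _
    _ = ∑ i ∈ s, ENNReal.ofReal δ := by rw [Finset.sum_const, nsmul_eq_mul]
    _ ≤ ∑ i ∈ s, volume (A i) := Finset.sum_le_sum fun i _ => hvol i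
    _ = volume (⋃ i ∈ s, A i) := (measure_biUnion_finset hdisj fun i _ => hmeas i).symm
    _ ≤ volume (cthickening δ (⋃ i, {y : ℝ × ℝ | ‖y - c i‖ = r i / 2})) := by
        apply measure_mono
        exact Set.iUnion₂_subset fun i _ => hsub i
end

section
/- There exists a compact set F_2 ⊆ ℝ^2 with box dimension exactly 3/2 such that for every t ∈ (0,1), F_2 contains the boundary of an axis-aligned square of side length t. -/
open Set Metric MeasureTheory Filter Topology
open scoped ENNReal

namespace BoxDim7

/-- weight for the set `A`: `2^{-(2i+1)}`. -/
noncomputable def wA (i : ℕ) : ℝ := (1/2) * (1/4)^i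
/-- weight for the set `B`: `2^{-(2i+2)}`. -/
noncomputable def wB (i : ℕ) : ℝ := (1/4) * (1/4)^i

lemma wA_pos (i : ℕ) : 0 < wA i := by unfold wA; positivity
lemma wB_pos (i : ℕ) : 0 < wB i := by unfold wB; positivity

lemma summable_wA : Summable wA := (summable_geometric_of_lt_one (by norm_num) (by norm_num)).mul_left _
lemma summable_wB : Summable wB := (summable_geometric_of_lt_one (by norm_num) (by norm_num)).mul_left _

lemma tsum_wA : ∑' i, wA i = 2/3 := by
  unfold wA; rw [tsum_mul_left, tsum_geometric_of_lt_one (by norm_num) (by norm_num)]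
  norm_num

lemma tsum_wB : ∑' i, wB i = 1/3 := by
  unfold wB; rw [tsum_mul_left, tsum_geometric_of_lt_one (by norm_num) (by norm_num)]
  norm_num

noncomputable def digSum (w : ℕ → ℝ) (d : ℕ → Bool) : ℝ := ∑' i, if d i then w i else 0

lemma summable_dig (w : ℕ → ℝ) (hw : Summable w) (hw0 : ∀ i, 0 ≤ w i) (d : ℕ → Bool) :
    Summable (fun i => if d i then w i else 0) := by
  apply Summable.of_nonneg_of_le (fun i => by by_cases h : d i <;> simp [h, hw0 i]) (fun i => ?_) hw
  by_cases h : d i <;> simp [h, hw0 i]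

lemma digSum_nonneg (w : ℕ → ℝ) (hw0 : ∀ i, 0 ≤ w i) (d : ℕ → Bool) : 0 ≤ digSum w d :=
  tsum_nonneg (fun i => by by_cases h : d i <;> simp [h, hw0 i])

lemma digSum_le (w : ℕ → ℝ) (hw : Summable w) (hw0 : ∀ i, 0 ≤ w i) (d : ℕ → Bool) :
    digSum w d ≤ ∑' i, w i := by
  apply Summable.tsum_le_tsum (fun i => ?_) (summable_dig w hw hw0 d) hw
  by_cases h : d i <;> simp [h, hw0 i]

def A : Set ℝ := Set.range (digSum wA)
def B : Set ℝ := Set.range (digSum wB)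

lemma A_subset : A ⊆ Icc 0 1 := by
  rintro _ ⟨d, rfl⟩
  refine ⟨digSum_nonneg _ (fun i => (wA_pos i).le) d, ?_⟩
  calc digSum wA d ≤ ∑' i, wA i := digSum_le _ summable_wA (fun i => (wA_pos i).le) d
  _ ≤ 1 := by rw [tsum_wA]; norm_num

lemma B_subset : B ⊆ Icc 0 1 := by
  rintro _ ⟨d, rfl⟩
  refine ⟨digSum_nonneg _ (fun i => (wB_pos i).le) d, ?_⟩
  calc digSum wB d ≤ ∑' i, wB i := digSum_le _ summable_wB (fun i => (wB_pos i).le) d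
  _ ≤ 1 := by rw [tsum_wB]; norm_num

/-- the Cantor-type set on the line -/
noncomputable def E : Set ℝ := closure (A ∪ (fun x => 1 - x) '' B)

lemma E_subset : E ⊆ Icc 0 1 := by
  apply closure_minimal _ isClosed_Icc
  rintro x (hx | ⟨b, hb, rfl⟩)
  · exact A_subset hx
  · have := B_subset hb; simp only []; constructor <;> [linarith [this.2]; linarith [this.1]]

lemma isCompact_E : IsCompact E :=
  isCompact_Icc.of_isClosed_subset isClosed_closure E_subset

/-- The planar set. -/
noncomputable def F : Set (ℝ × ℝ) := (E ×ˢ Icc 0 1) ∪ (Icc 0 1 ×ˢ E)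

lemma isCompact_F : IsCompact F :=
  (isCompact_E.prod isCompact_Icc).union (isCompact_Icc.prod isCompact_E)


/-- greedy partial sums of the binary expansion of `x` -/
noncomputable def gr (x : ℝ) : ℕ → ℝ
  | 0 => 0
  | n+1 => gr x n + if gr x n + (1/2)^(n+1) ≤ x then (1/2)^(n+1) else 0

lemma gr_invariant {x : ℝ} (hx : x ∈ Icc (0:ℝ) 1) (n : ℕ) :
    gr x n ≤ x ∧ x ≤ gr x n + (1/2)^n := by
  induction n with
  | zero => simpa [gr] using hx
  | succ n ih =>
    by_cases h : gr x n + (1/2)^(n+1) ≤ x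
    · refine ⟨by rw [gr, if_pos h]; exact h, ?_⟩
      rw [gr, if_pos h]
      have : (1/2:ℝ)^n = (1/2)^(n+1) + (1/2)^(n+1) := by ring
      linarith [ih.2]
    · refine ⟨by rw [gr, if_neg h]; simpa using ih.1, ?_⟩
      rw [gr, if_neg h]
      push_neg at h
      linarith

lemma gr_eq_partial_sum (x : ℝ) (n : ℕ) :
    ∑ i ∈ Finset.range n, (if gr x i + (1/2)^(i+1) ≤ x then ((1/2:ℝ))^(i+1) else 0) = gr x n := by
  induction n with
  | zero => simp [gr]
  | succ n ih => rw [Finset.sum_range_succ, ih]; simp [gr]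

lemma exists_binary (x : ℝ) (hx : x ∈ Icc (0:ℝ) 1) :
    ∃ d : ℕ → Bool, x = ∑' n, (if d n then ((1/2:ℝ))^(n+1) else 0) := by
  refine ⟨fun n => decide (gr x n + (1/2)^(n+1) ≤ x), ?_⟩
  have hgeom : Summable (fun i : ℕ => ((1/2:ℝ))^i * (1/2)) :=
    (summable_geometric_of_lt_one (by norm_num) (by norm_num)).mul_right _
  have hsumm : Summable (fun n => if (decide (gr x n + (1/2)^(n+1) ≤ x) : Bool) then ((1/2:ℝ))^(n+1) else 0) := by
    refine Summable.of_nonneg_of_le (fun i => ?_) (fun i => ?_) hgeom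
    · by_cases h : gr x i + (1/2)^(i+1) ≤ x <;> simp [h] <;> positivity
    · by_cases h : gr x i + (1/2)^(i+1) ≤ x <;> simp [h, pow_succ] <;> split <;> simp <;> positivity
  symm
  rw [← Summable.hasSum_iff hsumm]
  rw [hsumm.hasSum_iff_tendsto_nat]
  have heq : ∀ n, ∑ i ∈ Finset.range n, (if (decide (gr x i + (1/2)^(i+1) ≤ x) : Bool) then ((1/2:ℝ))^(i+1) else 0) = gr x n := by
    intro n
    rw [← gr_eq_partial_sum x n]
    exact Finset.sum_congr rfl (fun i _ => by by_cases h : gr x i + (1/2)^(i+1) ≤ x <;> simp [h])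
  simp only [heq]
  apply tendsto_of_tendsto_of_tendsto_of_le_of_le (g := fun n => x - (1/2:ℝ)^n) (h := fun _ => x)
  · have : Tendsto (fun n => (1/2:ℝ)^n) atTop (𝓝 0) :=
      tendsto_pow_atTop_nhds_zero_of_lt_one (by norm_num) (by norm_num)
    simpa using tendsto_const_nhds.sub this
  · exact tendsto_const_nhds
  · intro n; linarith [(gr_invariant hx n).2]
  · intro n; exact (gr_invariant hx n).1


lemma exists_split (x : ℝ) (hx : x ∈ Icc (0:ℝ) 1) : ∃ a ∈ A, ∃ b ∈ B, a + b = x := by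
  obtain ⟨d, hd⟩ := exists_binary x hx
  set f : ℕ → ℝ := fun n => if d n then ((1/2:ℝ))^(n+1) else 0 with hf
  have hgeom : Summable (fun i : ℕ => ((1/2:ℝ))^i * (1/2)) :=
    (summable_geometric_of_lt_one (by norm_num) (by norm_num)).mul_right _
  have hfs : Summable f := by
    refine Summable.of_nonneg_of_le (fun i => ?_) (fun i => ?_) hgeom
    · by_cases h : d i <;> simp [hf, h] <;> positivity
    · by_cases h : d i <;> simp [hf, h, pow_succ] <;> positivity
  refine ⟨digSum wA (fun k => d (2*k)), ⟨_, rfl⟩, digSum wB (fun k => d (2*k+1)), ⟨_, rfl⟩, ?_⟩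
  have he : (fun k => f (2*k)) = fun k => if d (2*k) then wA k else 0 := by
    funext k
    by_cases h : d (2*k) <;> simp [hf, h, wA]
    rw [show ((4:ℝ)^k) = 2^(2*k) by rw [pow_mul]; norm_num, ← mul_inv, ← pow_succ']
  have ho : (fun k => f (2*k+1)) = fun k => if d (2*k+1) then wB k else 0 := by
    funext k
    by_cases h : d (2*k+1) <;> simp [hf, h, wB]
    rw [show ((4:ℝ)^k) = 2^(2*k) by rw [pow_mul]; norm_num,
      show ((4:ℝ))⁻¹ = ((2:ℝ)^2)⁻¹ by norm_num, ← mul_inv, ← pow_add,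
      show 2*k+1+1 = 2+2*k from by omega]
  have hse : Summable fun k => f (2*k) := by
    rw [he]; exact summable_dig wA summable_wA (fun i => (wA_pos i).le) _
  have hso : Summable fun k => f (2*k+1) := by
    rw [ho]; exact summable_dig wB summable_wB (fun i => (wB_pos i).le) _
  have := tsum_even_add_odd hse hso
  rw [hd]
  unfold digSum
  rw [← he, ← ho]
  exact this

/-- For every `t ∈ (0,1)` there are `a, a+t ∈ E` with `[a, a+t] ⊆ [0,1]`. -/
lemma exists_pair (t : ℝ) (ht : t ∈ Ioo (0:ℝ) 1) :
    ∃ a : ℝ, a ∈ E ∧ a + t ∈ E ∧ 0 ≤ a ∧ a + t ≤ 1 := by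
  obtain ⟨a, ha, b, hb, hab⟩ := exists_split (1 - t) (Set.mem_Icc.mpr ⟨by linarith [ht.2], by linarith [ht.1]⟩)
  have haI := A_subset ha
  have hbI := B_subset hb
  refine ⟨a, subset_closure (Or.inl ha), ?_, haI.1, by linarith [hbI.1]⟩
  have : a + t = 1 - b := by linarith
  rw [this]
  exact subset_closure (Or.inr ⟨b, hb, rfl⟩)

lemma sphere_subset (t : ℝ) (ht : t ∈ Ioo (0:ℝ) 1) :
    ∃ c : ℝ × ℝ, {y : ℝ × ℝ | ‖y - c‖ = t / 2} ⊆ F := by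
  obtain ⟨a, haE, hatE, ha0, hat1⟩ := exists_pair t ht
  refine ⟨(a + t/2, a + t/2), ?_⟩
  intro y hy
  simp only [mem_setOf_eq, Prod.norm_def, Prod.fst_sub, Prod.snd_sub, Real.norm_eq_abs] at hy
  have h1le := le_max_left |y.1 - (a + t/2)| |y.2 - (a + t/2)|
  have h2le := le_max_right |y.1 - (a + t/2)| |y.2 - (a + t/2)|
  rw [hy] at h1le h2le
  have ht2 : (0:ℝ) ≤ t/2 := by linarith [ht.1]
  have hIcc : ∀ z : ℝ, |z - (a + t/2)| ≤ t/2 → z ∈ Icc (0:ℝ) 1 := by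
    intro z hz
    rw [abs_le] at hz
    exact ⟨by linarith [hz.1], by linarith [hz.2]⟩
  have hEmem : ∀ z : ℝ, |z - (a + t/2)| = t/2 → z ∈ E := by
    intro z hz
    rw [abs_eq ht2] at hz
    rcases hz with hz | hz
    · have : z = a + t := by linarith
      rw [this]; exact hatE
    · have : z = a := by linarith
      rw [this]; exact haE
  rcases max_choice |y.1 - (a + t/2)| |y.2 - (a + t/2)| with hm | hm
  · exact Or.inl ⟨hEmem y.1 (hm ▸ hy), hIcc y.2 h2le⟩
  · exact Or.inr ⟨hIcc y.1 h1le, hEmem y.2 (hm ▸ hy)⟩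

section CoverNum
variable {X : Type*} [PseudoMetricSpace X]

lemma coverNum_le_card {S : Set X} {r : ℝ} {s : Finset X}
    (h : S ⊆ ⋃ x ∈ s, closedBall x r) : coverNum S r ≤ s.card :=
  Nat.sInf_le ⟨s, rfl, h⟩

lemma card_le_coverNum {S : Set X} {r : ℝ} {P : Finset X} (hP : ↑P ⊆ S)
    (hsep : ∀ p ∈ P, ∀ q ∈ P, p ≠ q → 2*r < dist p q)
    (hne : ∃ s : Finset X, S ⊆ ⋃ x ∈ s, closedBall x r) :
    P.card ≤ coverNum S r := by
  obtain ⟨s0, hs0⟩ := hne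
  have hmem : coverNum S r ∈ {m : ℕ | ∃ s : Finset X, s.card = m ∧ S ⊆ ⋃ x ∈ s, closedBall x r} :=
    Nat.sInf_mem ⟨s0.card, s0, rfl, hs0⟩
  obtain ⟨s, hcard, hcov⟩ := hmem
  rw [← hcard]
  classical
  have hchoice : ∀ p ∈ P, ∃ x ∈ s, p ∈ closedBall x r := by
    intro p hp
    have := hcov (hP hp)
    simpa using this
  choose f hf1 hf2 using hchoice
  apply Finset.card_le_card_of_injOn (fun p => if hp : p ∈ P then f p hp else p)
  · intro p hp
    rw [Finset.mem_coe] at hp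
    simp only [hp, dif_pos]
    exact hf1 p hp
  · intro p hp q hq hpq
    simp only [Finset.mem_coe] at hp hq
    simp only [hp, hq, dif_pos] at hpq
    by_contra hne'
    have h1 := hf2 p hp
    have h2 := hf2 q hq
    rw [mem_closedBall] at h1 h2
    have : dist p q ≤ 2 * r := by
      calc dist p q ≤ dist p (f p hp) + dist (f p hp) q := dist_triangle _ _ _
      _ = dist p (f p hp) + dist q (f q hq) := by rw [hpq]; simp [dist_comm]
      _ ≤ r + r := add_le_add h1 h2
      _ = 2 * r := by ring
    exact absurd (hsep p hp q hq hne') (not_lt.mpr this)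

lemma coverNum_le_card' {S : Set X} {r r' : ℝ} {s : Finset X}
    (h : S ⊆ ⋃ x ∈ s, closedBall x r) (hr : r ≤ r') : coverNum S r' ≤ s.card :=
  coverNum_le_card (h.trans (iUnion₂_mono fun x _ => closedBall_subset_closedBall hr))

lemma prod_cover {S T : Set ℝ} {r : ℝ} {s t : Finset ℝ}
    (hs : S ⊆ ⋃ x ∈ s, closedBall x r) (ht : T ⊆ ⋃ x ∈ t, closedBall x r) :
    S ×ˢ T ⊆ ⋃ c ∈ s ×ˢ t, closedBall c r := by
  rintro ⟨x, y⟩ ⟨hx, hy⟩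
  obtain ⟨a, ha, hxa⟩ : ∃ a ∈ s, x ∈ closedBall a r := by simpa using hs hx
  obtain ⟨b, hb, hyb⟩ : ∃ b ∈ t, y ∈ closedBall b r := by simpa using ht hy
  refine mem_iUnion₂.mpr ⟨(a, b), Finset.mem_product.mpr ⟨ha, hb⟩, ?_⟩
  rw [← closedBall_prod_same]
  exact ⟨hxa, hyb⟩

end CoverNum

section Covers
open Finset in
/-- centers for the cover of `A` at scale `(1/4)^k` -/
noncomputable def centersA (k : ℕ) : Finset ℝ :=
  Finset.image (fun e : Fin k → Bool => ∑ i : Fin k, (if e i then wA i else 0)) Finset.univ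

open Finset in
noncomputable def centersB (k : ℕ) : Finset ℝ :=
  Finset.image (fun e : Fin k → Bool => ∑ i : Fin k, (if e i then wB i else 0)) Finset.univ

open Finset in
noncomputable def gridI (k : ℕ) : Finset ℝ :=
  Finset.image (fun j : ℕ => (j : ℝ) * (1/4)^k) (Finset.range (4^k+1))

lemma tsum_wA_shift (m : ℕ) : ∑' i, wA (i + m) = (2/3) * (1/4)^m := by
  have : (fun i => wA (i + m)) = fun i => (1/4)^m * wA i := by
    funext i; unfold wA; rw [pow_add]; ring
  rw [this, tsum_mul_left, tsum_wA]; ring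

lemma tsum_wB_shift (m : ℕ) : ∑' i, wB (i + m) = (1/3) * (1/4)^m := by
  have : (fun i => wB (i + m)) = fun i => (1/4)^m * wB i := by
    funext i; unfold wB; rw [pow_add]; ring
  rw [this, tsum_mul_left, tsum_wB]; ring

set_option maxHeartbeats 1000000 in
/-- generic tail estimate for digit sums -/
lemma digSum_dist_partial (w : ℕ → ℝ) (hw : Summable w) (hw0 : ∀ i, 0 ≤ w i)
    (d : ℕ → Bool) (k : ℕ) :
    |digSum w d - ∑ i ∈ Finset.range k, (if d i then w i else 0)| ≤ ∑' i, w (i + k) := by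
  have hs := summable_dig w hw hw0 d
  have hsplit := Summable.sum_add_tsum_nat_add (f := fun i => if d i then w i else 0) k hs
  have htail0 : 0 ≤ ∑' i, (if d (i + k) then w (i + k) else 0) :=
    tsum_nonneg (fun i => by by_cases h : d (i + k) <;> simp [h, hw0])
  have htail : ∑' i, (if d (i + k) then w (i + k) else 0) ≤ ∑' i, w (i + k) :=
    Summable.tsum_le_tsum (fun i => by by_cases h : d (i + k) <;> simp [h, hw0])
      ((summable_nat_add_iff k).mpr hs) ((summable_nat_add_iff k).mpr hw)
  have : digSum w d - ∑ i ∈ Finset.range k, (if d i then w i else 0)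
      = ∑' i, (if d (i + k) then w (i + k) else 0) := by
    unfold digSum; linarith [hsplit]
  rw [this, abs_of_nonneg htail0]
  exact htail

lemma cover_A (k : ℕ) : A ⊆ ⋃ x ∈ centersA k, closedBall x ((1/4)^k) := by
  rintro _ ⟨d, rfl⟩
  have hc : (∑ i : Fin k, (if d i then wA i else 0)) ∈ centersA k :=
    Finset.mem_image.mpr ⟨fun i => d i, Finset.mem_univ _, rfl⟩
  refine mem_iUnion₂.mpr ⟨_, hc, ?_⟩
  rw [mem_closedBall, Real.dist_eq]
  have h1 : (∑ i : Fin k, (if d (i:ℕ) then wA i else 0)) = ∑ i ∈ Finset.range k, (if d i then wA i else 0) :=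
    Fin.sum_univ_eq_sum_range (fun i => if d i then wA i else 0) k
  rw [h1]
  calc |digSum wA d - ∑ i ∈ Finset.range k, (if d i then wA i else 0)| ≤ ∑' i, wA (i + k) :=
        digSum_dist_partial wA summable_wA (fun i => (wA_pos i).le) d k
  _ = (2/3) * (1/4)^k := tsum_wA_shift k
  _ ≤ (1/4)^k := by nlinarith [pow_pos (show (0:ℝ) < 1/4 by norm_num) k]

lemma cover_B (k : ℕ) : B ⊆ ⋃ x ∈ centersB k, closedBall x ((1/4)^k) := by
  rintro _ ⟨d, rfl⟩
  have hc : (∑ i : Fin k, (if d i then wB i else 0)) ∈ centersB k :=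
    Finset.mem_image.mpr ⟨fun i => d i, Finset.mem_univ _, rfl⟩
  refine mem_iUnion₂.mpr ⟨_, hc, ?_⟩
  rw [mem_closedBall, Real.dist_eq]
  have h1 : (∑ i : Fin k, (if d (i:ℕ) then wB i else 0)) = ∑ i ∈ Finset.range k, (if d i then wB i else 0) :=
    Fin.sum_univ_eq_sum_range (fun i => if d i then wB i else 0) k
  rw [h1]
  calc |digSum wB d - ∑ i ∈ Finset.range k, (if d i then wB i else 0)| ≤ ∑' i, wB (i + k) :=
        digSum_dist_partial wB summable_wB (fun i => (wB_pos i).le) d k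
  _ = (1/3) * (1/4)^k := tsum_wB_shift k
  _ ≤ (1/4)^k := by nlinarith [pow_pos (show (0:ℝ) < 1/4 by norm_num) k]

noncomputable def centersE (k : ℕ) : Finset ℝ :=
  centersA k ∪ (centersB k).image (fun c => 1 - c)

lemma cover_E (k : ℕ) : E ⊆ ⋃ x ∈ centersE k, closedBall x ((1/4)^k) := by
  apply closure_minimal _ ((centersE k).finite_toSet.isClosed_biUnion (fun x _ => isClosed_closedBall))
  rintro x (hx | ⟨b, hb, rfl⟩)
  · obtain ⟨c, hc, hxc⟩ := mem_iUnion₂.mp (cover_A k hx)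
    exact mem_iUnion₂.mpr ⟨c, Finset.mem_union_left _ hc, hxc⟩
  · obtain ⟨c, hc, hbc⟩ := mem_iUnion₂.mp (cover_B k hb)
    refine mem_iUnion₂.mpr ⟨1 - c, Finset.mem_union_right _ (Finset.mem_image.mpr ⟨c, hc, rfl⟩), ?_⟩
    rw [mem_closedBall, Real.dist_eq] at hbc ⊢
    rw [show (1:ℝ) - b - (1 - c) = -(b - c) by ring, abs_neg]
    exact hbc

lemma cover_I (k : ℕ) : Icc (0:ℝ) 1 ⊆ ⋃ x ∈ gridI k, closedBall x ((1/4)^k) := by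
  intro x hx
  set j := ⌊x * 4^k⌋₊ with hj
  have h4 : (0:ℝ) < 4^k := by positivity
  have hjle : j ≤ 4^k := by
    rw [hj]
    calc ⌊x * 4^k⌋₊ ≤ ⌊(4:ℝ)^k⌋₊ := Nat.floor_le_floor (by nlinarith [hx.1, hx.2])
    _ = 4^k := by rw [show ((4:ℝ)^k) = ((4^k : ℕ) : ℝ) by push_cast; ring, Nat.floor_natCast]
  refine mem_iUnion₂.mpr ⟨(j:ℝ) * (1/4)^k, Finset.mem_image.mpr ⟨j, Finset.mem_range.mpr (by omega), rfl⟩, ?_⟩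
  rw [mem_closedBall, Real.dist_eq]
  have hfl : (j:ℝ) ≤ x * 4^k := Nat.floor_le (by nlinarith [hx.1])
  have hfu : x * 4^k < j + 1 := Nat.lt_floor_add_one _
  have hpow : (1/4:ℝ)^k = ((4:ℝ)^k)⁻¹ := by rw [one_div, inv_pow]
  have hinv : (0:ℝ) ≤ ((4:ℝ)^k)⁻¹ := (inv_pos.mpr h4).le
  have e1 : x - (j:ℝ) * ((4:ℝ)^k)⁻¹ = (x * 4^k - j) * ((4:ℝ)^k)⁻¹ := by
    field_simp
  rw [hpow, abs_le, e1]
  constructor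
  · calc -((4:ℝ)^k)⁻¹ ≤ 0 := by linarith
    _ ≤ (x * 4^k - j) * ((4:ℝ)^k)⁻¹ := mul_nonneg (by linarith) hinv
  · calc (x * 4^k - (j:ℝ)) * ((4:ℝ)^k)⁻¹ ≤ 1 * ((4:ℝ)^k)⁻¹ :=
        mul_le_mul_of_nonneg_right (by linarith) hinv
    _ = ((4:ℝ)^k)⁻¹ := one_mul _

end Covers


section Separation
open Finset

lemma abs_c_le (u v : ℕ → Bool) (n : ℕ) :
    |(if u n then wA n else 0) - (if v n then wA n else 0)| ≤ wA n := by
  cases hu : u n <;> cases hv : v n <;> simp [hu, hv, abs_of_nonneg (wA_pos n).le, (wA_pos n).le]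

lemma sum_wA_Ico_le (m k : ℕ) : ∑ i ∈ Finset.Ico m k, wA i ≤ (2/3) * (1/4)^m := by
  rw [Finset.sum_Ico_eq_sum_range]
  have h1 : ∑ i ∈ Finset.range (k - m), wA (m + i) = ∑ i ∈ Finset.range (k - m), wA (i + m) :=
    Finset.sum_congr rfl (fun i _ => by rw [add_comm])
  rw [h1, ← tsum_wA_shift m]
  exact Summable.sum_le_tsum _ (fun i _ => (wA_pos _).le) ((summable_nat_add_iff m).mpr summable_wA)

lemma sepA {k : ℕ} {e e' : Fin k → Bool} (hne : e ≠ e') :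
    (1/4:ℝ)^k < |(∑ i : Fin k, (if e i then wA i else 0)) - ∑ i : Fin k, (if e' i then wA i else 0)| := by
  classical
  set u : ℕ → Bool := fun n => if h : n < k then e ⟨n, h⟩ else false with hu_def
  set v : ℕ → Bool := fun n => if h : n < k then e' ⟨n, h⟩ else false with hv_def
  have hex : ∃ n, u n ≠ v n := by
    obtain ⟨j0, hj0⟩ := Function.ne_iff.mp hne
    exact ⟨j0, by simp [hu_def, hv_def, j0.isLt, hj0]⟩
  set j := Nat.find hex with hj_def
  have hj : u j ≠ v j := Nat.find_spec hex
  have hmin : ∀ m, m < j → u m = v m := fun m hm => not_ne_iff.mp (Nat.find_min hex hm)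
  have hjk : j < k := by
    by_contra hc
    push_neg at hc
    apply hj
    simp [hu_def, hv_def, dif_neg (not_lt.mpr hc)]
  -- rewrite the two sums over `range k`
  have hsum1 : (∑ i : Fin k, (if e i then wA i else 0)) = ∑ n ∈ range k, (if u n then wA n else 0) := by
    rw [Finset.sum_range fun n => _]
    exact Finset.sum_congr rfl (fun i _ => by simp [hu_def, i.isLt])
  have hsum2 : (∑ i : Fin k, (if e' i then wA i else 0)) = ∑ n ∈ range k, (if v n then wA n else 0) := by
    rw [Finset.sum_range fun n => _]
    exact Finset.sum_congr rfl (fun i _ => by simp [hv_def, i.isLt])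
  set c : ℕ → ℝ := fun n => (if u n then wA n else 0) - (if v n then wA n else 0) with hc_def
  have hΔ : (∑ i : Fin k, (if e i then wA i else 0)) - (∑ i : Fin k, (if e' i then wA i else 0))
      = ∑ n ∈ range k, c n := by
    rw [hsum1, hsum2, ← Finset.sum_sub_distrib]
  have hsplit : ∑ n ∈ range k, c n = ∑ n ∈ range j, c n + ∑ n ∈ Finset.Ico j k, c n :=
    (Finset.sum_range_add_sum_Ico c hjk.le).symm
  have hzero : ∑ n ∈ range j, c n = 0 :=
    Finset.sum_eq_zero (fun n hn => by simp [hc_def, hmin n (Finset.mem_range.mp hn)])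
  have hbot : ∑ n ∈ Finset.Ico j k, c n = c j + ∑ n ∈ Finset.Ico (j+1) k, c n :=
    Finset.sum_eq_sum_Ico_succ_bot hjk c
  have hcj : |c j| = wA j := by
    cases hu : u j <;> cases hv : v j <;>
      simp [hu, hv, hc_def, abs_of_nonneg (wA_pos j).le] at hj ⊢
  set T := ∑ n ∈ Finset.Ico (j+1) k, c n with hT_def
  have hT : |T| ≤ (2/3) * (1/4)^(j+1) := by
    calc |T| ≤ ∑ n ∈ Finset.Ico (j+1) k, |c n| := Finset.abs_sum_le_sum_abs _ _
    _ ≤ ∑ n ∈ Finset.Ico (j+1) k, wA n := Finset.sum_le_sum (fun n _ => abs_c_le u v n)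
    _ ≤ (2/3) * (1/4)^(j+1) := sum_wA_Ico_le _ _
  have hlow : wA j - |T| ≤ |∑ n ∈ range k, c n| := by
    rw [hsplit, hzero, zero_add, hbot]
    have h1 : |c j| ≤ |c j + T| + |T| := by
      have := abs_add_le (c j + T) (-T)
      simpa using this
    rw [← hcj]
    linarith
  rw [hΔ]
  have hpowj : (1/4:ℝ)^k ≤ (1/4)^(j+1) :=
    pow_le_pow_of_le_one (by norm_num) (by norm_num) hjk
  have hwAj : wA j = 2 * (1/4:ℝ)^(j+1) := by unfold wA; rw [pow_succ]; ring
  have hp : (0:ℝ) < (1/4)^(j+1) := by positivity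
  calc (1/4:ℝ)^k ≤ (1/4)^(j+1) := hpowj
  _ < 2 * (1/4)^(j+1) - (2/3) * (1/4)^(j+1) := by linarith
  _ ≤ wA j - |T| := by rw [hwAj]; linarith
  _ ≤ _ := hlow

lemma centersA_sep {k : ℕ} {p q : ℝ} (hp : p ∈ centersA k) (hq : q ∈ centersA k) (hpq : p ≠ q) :
    (1/4:ℝ)^k < |p - q| := by
  obtain ⟨e, _, rfl⟩ := Finset.mem_image.mp hp
  obtain ⟨e', _, rfl⟩ := Finset.mem_image.mp hq
  exact sepA (fun h => hpq (by rw [h]))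

lemma centersA_card (k : ℕ) : (centersA k).card = 2^k := by
  rw [centersA, Finset.card_image_of_injective _ ?_, Finset.card_univ]
  · simp
  · intro e e' h
    by_contra hne
    have h2 := sepA (k := k) (e := e) (e' := e') hne
    simp only at h
    rw [h, sub_self, abs_zero] at h2
    have : (0:ℝ) < (1/4)^k := by positivity
    linarith

lemma centersA_subset_A (k : ℕ) : ↑(centersA k) ⊆ A := by
  intro p hp
  obtain ⟨e, _, rfl⟩ := Finset.mem_image.mp hp
  classical
  refine ⟨fun n => if h : n < k then e ⟨n, h⟩ else false, ?_⟩
  unfold digSum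
  rw [tsum_eq_sum (s := Finset.range k) (fun n hn => by
    simp [dif_neg (not_lt.mpr (not_lt.mp (fun h => hn (Finset.mem_range.mpr h))))])]
  rw [Finset.sum_range fun n => _]
  exact Finset.sum_congr rfl (fun i _ => by simp [i.isLt])

lemma gridI_card (k : ℕ) : (gridI k).card = 4^k + 1 := by
  rw [gridI, Finset.card_image_of_injective, Finset.card_range]
  intro a b h
  have h4 : (0:ℝ) < (1/4)^k := by positivity
  have := mul_right_cancel₀ (ne_of_gt h4) h
  exact_mod_cast this

lemma gridI_subset (k : ℕ) : ↑(gridI k) ⊆ Icc (0:ℝ) 1 := by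
  intro p hp
  obtain ⟨j, hj, rfl⟩ := Finset.mem_image.mp hp
  have hjle : (j:ℝ) ≤ 4^k := by
    have := Finset.mem_range.mp hj
    have : j ≤ 4^k := by omega
    calc (j:ℝ) ≤ ((4^k : ℕ) : ℝ) := by exact_mod_cast this
    _ = 4^k := by push_cast; ring
  have h4 : (0:ℝ) < (1/4)^k := by positivity
  constructor
  · positivity
  · calc (j:ℝ) * (1/4)^k ≤ (4:ℝ)^k * (1/4)^k := by nlinarith
    _ = 1 := by rw [← mul_pow]; norm_num

lemma gridI_sep {k : ℕ} {p q : ℝ} (hp : p ∈ gridI k) (hq : q ∈ gridI k) (hpq : p ≠ q) :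
    (1/4:ℝ)^k ≤ |p - q| := by
  obtain ⟨a, _, rfl⟩ := Finset.mem_image.mp hp
  obtain ⟨b, _, rfl⟩ := Finset.mem_image.mp hq
  have hab : a ≠ b := fun h => hpq (by rw [h])
  have hz : ((a:ℤ)) ≠ (b:ℤ) := by exact_mod_cast hab
  have h1 : (1:ℤ) ≤ |(a:ℤ) - b| := Int.one_le_abs (sub_ne_zero.mpr hz)
  have h1' : (1:ℝ) ≤ |(a:ℝ) - b| := by
    have := (Int.cast_le (R := ℝ)).mpr h1
    rwa [Int.cast_abs, Int.cast_one, Int.cast_sub, Int.cast_natCast, Int.cast_natCast] at this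
  have h4 : (0:ℝ) < (1/4)^k := by positivity
  calc (1/4:ℝ)^k = 1 * (1/4)^k := (one_mul _).symm
  _ ≤ |(a:ℝ) - b| * (1/4)^k := by nlinarith
  _ = |(a:ℝ) * (1/4)^k - (b:ℝ) * (1/4)^k| := by
      rw [← sub_mul, abs_mul, abs_of_pos h4]

end Separation


section FBounds

noncomputable def coverF (k : ℕ) : Finset (ℝ × ℝ) :=
  ((centersE k) ×ˢ (gridI k)) ∪ ((gridI k) ×ˢ (centersE k))

lemma cover_F (k : ℕ) : F ⊆ ⋃ c ∈ coverF k, closedBall c ((1/4)^k) := by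
  rintro p (hp | hp)
  · obtain ⟨c, hc, hpc⟩ := mem_iUnion₂.mp (prod_cover (cover_E k) (cover_I k) hp)
    exact mem_iUnion₂.mpr ⟨c, Finset.mem_union_left _ hc, hpc⟩
  · obtain ⟨c, hc, hpc⟩ := mem_iUnion₂.mp (prod_cover (cover_I k) (cover_E k) hp)
    exact mem_iUnion₂.mpr ⟨c, Finset.mem_union_right _ hc, hpc⟩

lemma coverF_card (k : ℕ) : (coverF k).card ≤ 8 * 8^k := by
  have hE : (centersE k).card ≤ 2^(k+1) := by
    calc (centersE k).card ≤ (centersA k).card + ((centersB k).image (fun c => 1 - c)).card :=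
          Finset.card_union_le _ _
    _ ≤ 2^k + (centersB k).card := by
        rw [centersA_card]
        exact Nat.add_le_add_left (Finset.card_image_le) _
    _ ≤ 2^k + 2^k := by
        have : (centersB k).card ≤ 2^k := by
          calc (centersB k).card ≤ (Finset.univ : Finset (Fin k → Bool)).card := Finset.card_image_le
          _ = 2^k := by simp
        omega
    _ = 2^(k+1) := by ring
  have hI : (gridI k).card ≤ 2 * 4^k := by
    rw [gridI_card]
    have : 1 ≤ 4^k := Nat.one_le_two_pow.trans (Nat.pow_le_pow_left (by norm_num) k)
    omega
  calc (coverF k).card ≤ ((centersE k) ×ˢ (gridI k)).card + ((gridI k) ×ˢ (centersE k)).card :=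
        Finset.card_union_le _ _
  _ = (centersE k).card * (gridI k).card + (gridI k).card * (centersE k).card := by
      rw [Finset.card_product, Finset.card_product]
  _ ≤ 2^(k+1) * (2 * 4^k) + (2 * 4^k) * 2^(k+1) := by
      exact Nat.add_le_add (Nat.mul_le_mul hE hI) (Nat.mul_le_mul hI hE)
  _ = 8 * (2^k * 4^k) := by ring
  _ = 8 * 8^k := by rw [← Nat.mul_pow]

lemma coverNum_F_upper (k : ℕ) {r : ℝ} (hr : (1/4:ℝ)^k ≤ r) : coverNum F r ≤ 8 * 8^k :=
  le_trans (coverNum_le_card' (cover_F k) hr) (coverF_card k)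

lemma coverNum_F_lower (k : ℕ) {r : ℝ} (h0 : 0 < r) (h2 : 2*r < (1/4:ℝ)^k) :
    8^k ≤ coverNum F r := by
  have hP : ↑((centersA k) ×ˢ (gridI k)) ⊆ F := by
    rintro ⟨p, q⟩ hpq
    rw [Finset.coe_product] at hpq
    obtain ⟨hp, hq⟩ := hpq
    exact Or.inl ⟨subset_closure (Or.inl (centersA_subset_A k hp)), gridI_subset k hq⟩
  have hsep : ∀ p ∈ (centersA k) ×ˢ (gridI k), ∀ q ∈ (centersA k) ×ˢ (gridI k),
      p ≠ q → 2*r < dist p q := by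
    rintro ⟨p1, p2⟩ hp ⟨q1, q2⟩ hq hpq
    rw [Finset.mem_product] at hp hq
    rw [Prod.dist_eq]
    by_cases h1 : p1 = q1
    · have h2' : p2 ≠ q2 := fun h => hpq (by rw [h1, h])
      have := gridI_sep hp.2 hq.2 h2'
      have hd : (1/4:ℝ)^k ≤ dist p2 q2 := by rwa [Real.dist_eq]
      calc 2*r < (1/4:ℝ)^k := h2
      _ ≤ dist p2 q2 := hd
      _ ≤ max (dist p1 q1) (dist p2 q2) := le_max_right _ _
    · have := centersA_sep hp.1 hq.1 h1
      have hd : (1/4:ℝ)^k < dist p1 q1 := by rwa [Real.dist_eq]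
      calc 2*r < dist p1 q1 := h2.trans hd
      _ ≤ max (dist p1 q1) (dist p2 q2) := le_max_left _ _
  have hne : ∃ s : Finset (ℝ × ℝ), F ⊆ ⋃ x ∈ s, closedBall x r := by
    obtain ⟨m, hm⟩ := exists_pow_lt_of_lt_one h0 (show (1/4:ℝ) < 1 by norm_num)
    exact ⟨coverF m, (cover_F m).trans (iUnion₂_mono fun x _ => closedBall_subset_closedBall hm.le)⟩
  have hcard := card_le_coverNum hP hsep hne
  rw [Finset.card_product, centersA_card, gridI_card] at hcard
  calc 8^k = 2^k * 4^k := by rw [← Nat.mul_pow]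
  _ ≤ 2^k * (4^k + 1) := Nat.mul_le_mul_left _ (by omega)
  _ ≤ coverNum F r := hcard

end FBounds


section Limit

lemma log2_pos : (0:ℝ) < Real.log 2 := Real.log_pos (by norm_num)

lemma log_bounds {r : ℝ} (h0 : 0 < r) (h1 : r < 1/16) :
    (3/2) * (-Real.log r) - 6 * Real.log 2 ≤ Real.log (coverNum F r) ∧
    Real.log (coverNum F r) ≤ (3/2) * (-Real.log r) + 6 * Real.log 2 := by
  classical
  have hex : ∃ k, (1/4:ℝ)^k ≤ r := by
    obtain ⟨k, hk⟩ := exists_pow_lt_of_lt_one h0 (show (1/4:ℝ) < 1 by norm_num)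
    exact ⟨k, hk.le⟩
  have hk : (1/4:ℝ)^(Nat.find hex) ≤ r := Nat.find_spec hex
  have hk2 : 1 < Nat.find hex := by
    rw [Nat.lt_find_iff hex 1]
    intro m hm hle
    interval_cases m
    · norm_num at hle; linarith
    · norm_num at hle; linarith
  obtain ⟨m, hm⟩ : ∃ m, Nat.find hex = m + 2 := ⟨Nat.find hex - 2, by omega⟩
  rw [hm] at hk
  have hmin : r < (1/4:ℝ)^(m+1) := by
    have := Nat.find_min hex (show m + 1 < Nat.find hex by omega)
    push_neg at this
    exact this
  have hp1 : (0:ℝ) < (1/4:ℝ)^(m+1) := by positivity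
  -- covering number bounds
  have hupper : coverNum F r ≤ 8 * 8^(m+2) := coverNum_F_upper (m+2) hk
  have hlower : 8^m ≤ coverNum F r := by
    apply coverNum_F_lower m h0
    have : (1/4:ℝ)^(m+1) = (1/4) * (1/4)^m := by rw [pow_succ]; ring
    rw [this] at hmin
    have hp : (0:ℝ) < (1/4:ℝ)^m := by positivity
    linarith
  -- pass to logs
  have hNpos : (0:ℝ) < (coverNum F r : ℝ) := by
    have h8 : (1:ℕ) ≤ 8^m := Nat.one_le_two_pow.trans (Nat.pow_le_pow_left (by norm_num) m)
    exact_mod_cast lt_of_lt_of_le (by omega : 0 < 8^m) hlower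
  have hlog_upper : Real.log (coverNum F r) ≤ ((m:ℝ)+3) * (3 * Real.log 2) := by
    calc Real.log (coverNum F r) ≤ Real.log ((8:ℝ)^(m+3)) := by
          apply Real.log_le_log hNpos
          have : ((coverNum F r : ℕ) : ℝ) ≤ ((8 * 8^(m+2) : ℕ) : ℝ) := by exact_mod_cast hupper
          calc ((coverNum F r : ℕ) : ℝ) ≤ ((8 * 8^(m+2) : ℕ) : ℝ) := this
          _ = (8:ℝ)^(m+3) := by push_cast; ring
    _ = ((m:ℝ)+3) * Real.log 8 := by
        rw [Real.log_pow]; push_cast; ring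
    _ = ((m:ℝ)+3) * (3 * Real.log 2) := by
        rw [show (8:ℝ) = 2^3 by norm_num, Real.log_pow]; push_cast; ring
  have hlog_lower : (m:ℝ) * (3 * Real.log 2) ≤ Real.log (coverNum F r) := by
    calc (m:ℝ) * (3 * Real.log 2) = Real.log ((8:ℝ)^m) := by
          rw [show (8:ℝ) = 2^3 by norm_num, ← Real.rpow_natCast ((2:ℝ)^3) m,
            Real.log_rpow (by norm_num), Real.log_pow]
          push_cast; ring
    _ ≤ Real.log (coverNum F r) := by
        apply Real.log_le_log (by positivity)
        have : ((8^m : ℕ) : ℝ) ≤ ((coverNum F r : ℕ) : ℝ) := by exact_mod_cast hlower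
        calc (8:ℝ)^m = ((8^m : ℕ) : ℝ) := by push_cast; ring
        _ ≤ _ := this
  -- bounds on -log r
  have hlogr1 : -Real.log r ≤ 2*((m:ℝ)+2) * Real.log 2 := by
    have h := Real.log_le_log (by positivity) hk
    rw [Real.log_pow, show (1/4:ℝ) = 4⁻¹ by norm_num, Real.log_inv,
      show (4:ℝ) = 2^2 by norm_num, Real.log_pow] at h
    push_cast at h
    linarith
  have hlogr2 : 2*((m:ℝ)+1) * Real.log 2 ≤ -Real.log r := by
    have h := Real.log_lt_log h0 hmin
    rw [Real.log_pow, show (1/4:ℝ) = 4⁻¹ by norm_num, Real.log_inv,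
      show (4:ℝ) = 2^2 by norm_num, Real.log_pow] at h
    push_cast at h
    linarith
  have hl2 := log2_pos
  constructor
  · nlinarith
  · nlinarith

lemma neg_log_tendsto : Tendsto (fun r : ℝ => -Real.log r) (𝓝[>] 0) atTop :=
  tendsto_neg_atBot_atTop.comp Real.tendsto_log_nhdsGT_zero

lemma err_tendsto : Tendsto (fun r : ℝ => 6 * Real.log 2 / (-Real.log r)) (𝓝[>] 0) (𝓝 0) :=
  Tendsto.div_atTop tendsto_const_nhds neg_log_tendsto

lemma f_tendsto :
    Tendsto (fun r : ℝ => Real.log (coverNum F r) / (-Real.log r)) (𝓝[>] 0) (𝓝 (3/2)) := by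
  have hmem : Ioo (0:ℝ) (1/16) ∈ 𝓝[>] (0:ℝ) :=
    Ioo_mem_nhdsGT_of_mem (by constructor <;> norm_num)
  apply tendsto_of_tendsto_of_tendsto_of_le_of_le'
    (g := fun r => 3/2 - 6 * Real.log 2 / (-Real.log r))
    (h := fun r => 3/2 + 6 * Real.log 2 / (-Real.log r))
  · simpa using tendsto_const_nhds.sub err_tendsto
  · simpa using tendsto_const_nhds.add err_tendsto
  · filter_upwards [hmem] with r hr
    have h0 := hr.1
    have h1 := hr.2
    have hlr : 0 < -Real.log r := by
      have : Real.log r < 0 := Real.log_neg h0 (by linarith)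
      linarith
    have hb := (log_bounds h0 h1).1
    rw [le_div_iff₀ hlr, sub_mul, div_mul_cancel₀ _ (ne_of_gt hlr)]
    linarith
  · filter_upwards [hmem] with r hr
    have h0 := hr.1
    have h1 := hr.2
    have hlr : 0 < -Real.log r := by
      have : Real.log r < 0 := Real.log_neg h0 (by linarith)
      linarith
    have hb := (log_bounds h0 h1).2
    rw [div_le_iff₀ hlr, add_mul, div_mul_cancel₀ _ (ne_of_gt hlr)]
    linarith

end Limit
end BoxDim7

/-- There is a compact planar set of box dimension exactly `3/2`
containing the boundary of an axis-aligned square of every side length in `(0,1)`. -/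
theorem exists_compact_boxDim_three_halves_with_all_squares :
    ∃ F : Set (ℝ × ℝ), IsCompact F ∧ lowerBoxDim F = 3/2 ∧ upperBoxDim F = 3/2 ∧
      ∀ t ∈ Set.Ioo (0:ℝ) 1, ∃ c : ℝ × ℝ, {y : ℝ × ℝ | ‖y - c‖ = t / 2} ⊆ F := by
  exact ⟨BoxDim7.F, BoxDim7.isCompact_F,
    BoxDim7.f_tendsto.liminf_eq,
    BoxDim7.f_tendsto.limsup_eq,
    fun t ht => BoxDim7.sphere_subset t ht⟩
end

section
/- For every integer n > 1 there exists a set B ⊆ {0, 1, …, n−1} with |B| ≤ 2(n log n)^{1/2} + 2 such that B + B covers all residues modulo n, i.e., for every m ∈ {0,…,n−1} there exist b_1, b_2 ∈ B with b_1 + b_2 ≡ m (mod n). -/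
/-- Nathanson. For every `n > 1` there is a set `B ⊆ {0,…,n-1}` with
`|B| ≤ 2√(n log n) + 2` such that `B + B` covers all residues mod `n`. -/
theorem nathanson_thin_basis (n : ℕ) (hn : 1 < n) :
    ∃ B : Finset ℕ, B ⊆ Finset.range n ∧
      (B.card : ℝ) ≤ 2 * Real.sqrt (n * Real.log n) + 2 ∧
      ∀ m < n, ∃ b₁ ∈ B, ∃ b₂ ∈ B, (b₁ + b₂) % n = m := by
  set s := Nat.sqrt (n - 1) with hs
  set k := s + 1 with hk
  have hk0 : 0 < k := Nat.succ_pos _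
  have hlt : n - 1 < k * k := by
    have h := Nat.lt_succ_sqrt' (n - 1)
    simpa [hk, hs, sq] using h
  set q := (n - 1) / k + 1 with hq
  have hdiv : (n - 1) / k < k := Nat.div_lt_of_lt_mul (by nlinarith)
  have hqk : q ≤ k := by omega
  have hkn : k ≤ n := by
    have := Nat.sqrt_le_self (n - 1)
    omega
  refine ⟨Finset.range k ∪ (Finset.range q).image (· * k), ?_, ?_, ?_⟩
  · intro x hx
    simp only [Finset.mem_union, Finset.mem_range, Finset.mem_image] at hx ⊢
    rcases hx with h | ⟨i, hi, rfl⟩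
    · omega
    · have hi' : i ≤ (n - 1) / k := by omega
      have h1 := Nat.div_mul_le_self (n - 1) k
      have h2 : i * k ≤ ((n - 1) / k) * k := Nat.mul_le_mul_right k hi'
      omega
  · have hcard : (Finset.range k ∪ (Finset.range q).image (· * k)).card ≤ 2 * k := by
      calc (Finset.range k ∪ (Finset.range q).image (· * k)).card
          ≤ (Finset.range k).card + ((Finset.range q).image (· * k)).card :=
            Finset.card_union_le _ _
        _ ≤ k + q := by
            gcongr
            · simp
            · exact le_trans (Finset.card_image_le) (by simp)
        _ ≤ 2 * k := by omega
    have h1 : ((Finset.range k ∪ (Finset.range q).image (· * k)).card : ℝ) ≤ 2 * k := by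
      exact_mod_cast hcard
    refine h1.trans ?_
    have hsle : (s : ℝ) ≤ Real.sqrt (n - 1 : ℕ) := by
      rw [hs]
      exact Real.nat_sqrt_le_real_sqrt
    have hcast : ((n - 1 : ℕ) : ℝ) = (n : ℝ) - 1 := by
      rw [Nat.cast_sub hn.le]
      norm_num
    have hlog : (n : ℝ) - 1 ≤ (n : ℝ) * Real.log n := by
      rcases eq_or_lt_of_le (show 2 ≤ n from hn) with h2 | h3
      · have : Real.log 2 > 0.6931471803 := Real.log_two_gt_d9
        rw [← h2]
        push_cast
        nlinarith
      · have h3' : (3 : ℝ) ≤ (n : ℝ) := by exact_mod_cast h3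
        have hlog1 : (1 : ℝ) ≤ Real.log n := by
          rw [Real.le_log_iff_exp_le (by linarith)]
          have := Real.exp_one_lt_d9
          linarith
        nlinarith
    have hsq : Real.sqrt ((n : ℝ) - 1) ≤ Real.sqrt ((n : ℝ) * Real.log n) :=
      Real.sqrt_le_sqrt hlog
    have hks : (k : ℝ) = (s : ℝ) + 1 := by push_cast [hk]; ring
    have hfin : (s : ℝ) ≤ Real.sqrt ((n : ℝ) * Real.log n) :=
      hsle.trans (by rw [hcast]; exact hsq)
    rw [hks]
    linarith
  · intro m hm
    refine ⟨m % k, ?_, (m / k) * k, ?_, ?_⟩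
    · exact Finset.mem_union_left _ (Finset.mem_range.2 (Nat.mod_lt _ hk0))
    · refine Finset.mem_union_right _ ?_
      simp only [Finset.mem_image, Finset.mem_range]
      exact ⟨m / k, by
        have : m / k ≤ (n - 1) / k := Nat.div_le_div_right (by omega)
        omega, rfl⟩
    · rw [Nat.mod_add_div', Nat.mod_eq_of_lt hm]
end

section
/- For every σ > 0 there exists a compact set F ⊆ [0,1] with Assouad dimension at most 1/2 + σ such that the difference set {|x − y| : x, y ∈ F} contains [0,1]. -/
open Set Metric MeasureTheory Filter Topology
open scoped ENNReal

namespace AD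

variable (m : ℕ)

/-- base -/
def nn : ℕ := m ^ 2

/-- digit set -/
def D : Finset ℕ := Finset.range m ∪ (Finset.range m).image (fun q => q * m + (m - 1))

lemma card_D_le : (D m).card ≤ 2 * m := by
  classical
  calc (D m).card ≤ (Finset.range m).card + ((Finset.range m).image (fun q => q * m + (m-1))).card :=
        Finset.card_union_le _ _
    _ ≤ m + m := by
        gcongr
        · simp
        · exact le_trans (Finset.card_image_le) (by simp)
    _ = 2 * m := by ring

lemma D_lt_n (hm : 2 ≤ m) : ∀ a ∈ D m, a < nn m := by
  intro a ha
  rcases Finset.mem_union.1 ha with h | h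
  · have := Finset.mem_range.1 h
    have : a < m := this
    calc a < m := this
      _ ≤ m * m := Nat.le_mul_of_pos_left m (by omega)
      _ = nn m := by simp [nn, sq]
  · rcases Finset.mem_image.1 h with ⟨q, hq, rfl⟩
    have hqm : q < m := Finset.mem_range.1 hq
    have : q * m + (m - 1) ≤ (m - 1) * m + (m - 1) := by
      have : q ≤ m - 1 := by omega
      nlinarith [Nat.sub_le m 1]
    have h2 : (m - 1) * m + (m - 1) < m * m := by nlinarith [Nat.sub_lt (by omega : 0 < m) one_pos, Nat.sub_add_cancel (by omega : 1 ≤ m)]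
    calc q * m + (m-1) ≤ (m-1) * m + (m-1) := this
      _ < m * m := h2
      _ = nn m := by simp [nn, sq]

lemma zero_mem_D (hm : 2 ≤ m) : 0 ∈ D m := by
  simp [D, Finset.mem_union, Finset.mem_range]; omega

lemma nsub1_mem_D (hm : 2 ≤ m) : nn m - 1 ∈ D m := by
  apply Finset.mem_union_right
  apply Finset.mem_image.2
  refine ⟨m - 1, by simp [Finset.mem_range]; omega, ?_⟩
  obtain ⟨d, rfl⟩ : ∃ d, m = d + 1 := ⟨m - 1, by omega⟩
  simp [nn, sq]
  ring_nf
  omega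

/-- every residue < n is a difference of two digits -/
lemma diff_digits (hm : 2 ≤ m) : ∀ t < nn m, ∃ a ∈ D m, ∃ b ∈ D m, b ≤ a ∧ a - b = t := by
  intro t ht
  refine ⟨t / m * m + (m - 1), ?_, (m - 1) - t % m, ?_, ?_, ?_⟩
  · apply Finset.mem_union_right
    apply Finset.mem_image.2
    refine ⟨t / m, Finset.mem_range.2 ?_, rfl⟩
    have : t < m * m := by simpa [nn, sq] using ht
    exact Nat.div_lt_of_lt_mul (by omega)
  · apply Finset.mem_union_left
    simp [Finset.mem_range]; omega
  · have := Nat.mod_lt t (show 0 < m by omega)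
    omega
  · have h1 := Nat.mod_lt t (show 0 < m by omega)
    have h2 := Nat.div_add_mod t m
    have h3 : t / m * m = m * (t / m) := Nat.mul_comm _ _
    omega


section
variable (n : ℕ)

/-- the coding map, for general base n -/
noncomputable def g (c : ℕ → ℕ) : ℝ := ∑' i, (c i : ℝ) / (n : ℝ) ^ (i + 1)

lemma term_le (hn : 2 ≤ n) (c : ℕ → ℕ) (hc : ∀ i, c i < n) (i : ℕ) :
    (c i : ℝ) / (n:ℝ) ^ (i + 1) ≤ (1 / (n:ℝ)) ^ i := by
  have hn0 : (0:ℝ) < n := by positivity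
  have h1 : (c i : ℝ) ≤ (n : ℝ) := by exact_mod_cast (hc i).le
  rw [div_pow, one_pow]
  rw [div_le_div_iff₀ (by positivity) (by positivity)]
  calc (c i : ℝ) * (n:ℝ)^i ≤ (n:ℝ) * (n:ℝ)^i := by gcongr
    _ = (n:ℝ)^(i+1) := by ring
    _ = 1 * (n:ℝ)^(i+1) := by ring

lemma summable_geom (hn : 2 ≤ n) : Summable (fun i : ℕ => (1 / (n:ℝ)) ^ i) := by
  have hn0 : (0:ℝ) < n := by positivity
  exact summable_geometric_of_lt_one (by positivity)
    (by rw [div_lt_one hn0]; exact_mod_cast by omega)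

lemma summable_aux (hn : 2 ≤ n) (c : ℕ → ℕ) (hc : ∀ i, c i < n) :
    Summable (fun i => (c i : ℝ) / (n:ℝ) ^ (i + 1)) :=
  Summable.of_nonneg_of_le (fun i => by positivity) (term_le n hn c hc) (summable_geom n hn)

lemma pow_split (l i : ℕ) : (n:ℝ) ^ (l + i + 1) = (n:ℝ)^l * (n:ℝ)^(i+1) := by
  rw [← pow_add, Nat.add_assoc]

lemma summable_shift (hn : 2 ≤ n) (c : ℕ → ℕ) (hc : ∀ i, c i < n) (l : ℕ) :
    Summable (fun i => (c (l + i) : ℝ) / (n:ℝ) ^ (l + i + 1)) := by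
  have : (fun i => (c (l + i) : ℝ) / (n:ℝ) ^ (l + i + 1))
      = fun i => ((1:ℝ)/(n:ℝ))^l * ((c (l + i) : ℝ) / (n:ℝ) ^ (i + 1)) := by
    funext i
    rw [pow_split, div_pow, one_pow]
    have hn0 : (0:ℝ) < n := by positivity
    field_simp
  rw [this]
  exact (summable_aux n hn (fun i => c (l + i)) (fun i => hc _)).mul_left _

/-- shifted geometric tail: ∑' i, (n-1)/n^(l+i+1) = (1/n)^l -/
lemma tsum_tail (hn : 2 ≤ n) (l : ℕ) :
    ∑' i : ℕ, ((n : ℝ) - 1) / (n:ℝ) ^ (l + i + 1) = (1 / (n:ℝ)) ^ l := by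
  have hn0 : (0:ℝ) < n := by positivity
  have hlt : (1:ℝ)/n < 1 := by rw [div_lt_one hn0]; exact_mod_cast by omega
  have h : ∀ i : ℕ, ((n : ℝ) - 1) / (n:ℝ) ^ (l + i + 1)
      = (((n:ℝ)-1) / (n:ℝ)^(l+1)) * (1/(n:ℝ))^i := by
    intro i
    have h2 : (n:ℝ) ^ (l + i + 1) = (n:ℝ)^(l+1) * (n:ℝ)^i := by
      rw [← pow_add]; congr 1; omega
    rw [h2, div_pow, one_pow]
    field_simp
  rw [tsum_congr h, tsum_mul_left, tsum_geometric_of_lt_one (by positivity) hlt]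
  have hne : (n:ℝ) - 1 ≠ 0 := by
    have : (2:ℝ) ≤ n := by exact_mod_cast hn
    linarith
  have h3 : (n:ℝ)^(l+1) = (n:ℝ)^l * n := by ring
  field_simp [h3]
  ring
  rw [inv_pow, mul_assoc, mul_inv_cancel₀ (by positivity), mul_one]

lemma summable_tail_geom (hn : 2 ≤ n) (l : ℕ) :
    Summable (fun i : ℕ => ((n : ℝ) - 1) / (n:ℝ) ^ (l + i + 1)) := by
  have : (fun i : ℕ => ((n : ℝ) - 1) / (n:ℝ) ^ (l + i + 1))
      = fun i => (((n:ℝ)-1) / (n:ℝ)^(l+1)) * (1/(n:ℝ))^i := by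
    funext i
    have h2 : (n:ℝ) ^ (l + i + 1) = (n:ℝ)^(l+1) * (n:ℝ)^i := by
      rw [← pow_add]; congr 1; omega
    have hn0 : (0:ℝ) < n := by positivity
    rw [h2, div_pow, one_pow]
    field_simp
  rw [this]
  exact (summable_geom n hn).mul_left _

lemma tsum_tail_le (hn : 2 ≤ n) (c : ℕ → ℕ) (hc : ∀ i, c i < n) (l : ℕ) :
    ∑' i : ℕ, (c (l + i) : ℝ) / (n:ℝ) ^ (l + i + 1) ≤ (1/(n:ℝ))^l := by
  rw [← tsum_tail n hn l]
  apply Summable.tsum_le_tsum _ (summable_shift n hn c hc l) (summable_tail_geom n hn l)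
  intro i
  have : (c (l+i) : ℝ) ≤ (n:ℝ) - 1 := by
    have := hc (l+i)
    have h2 : (c (l+i) : ℝ) + 1 ≤ (n:ℝ) := by exact_mod_cast this
    linarith
  gcongr

/-- the value of the all-(n-1) digits: g = 1 -/
lemma tsum_all_max (hn : 2 ≤ n) : ∑' i : ℕ, ((n : ℝ) - 1) / (n:ℝ) ^ (i + 1) = 1 := by
  have := tsum_tail n hn 0
  simpa using this

lemma g_nonneg (hn : 2 ≤ n) (c : ℕ → ℕ) : 0 ≤ g n c := by
  apply tsum_nonneg
  intro i
  positivity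

lemma g_le_one (hn : 2 ≤ n) (c : ℕ → ℕ) (hc : ∀ i, c i < n) : g n c ≤ 1 := by
  rw [← tsum_all_max n hn]
  apply Summable.tsum_le_tsum _ (summable_aux n hn c hc) (summable_tail_geom n hn 0 |>.congr (by intro i; simp))
  intro i
  have h2 : (c i : ℝ) + 1 ≤ (n:ℝ) := by exact_mod_cast hc i
  gcongr
  linarith

end


variable (n : ℕ)

lemma exists_digits (hn : 2 ≤ n) (d : ℝ) (hd0 : 0 ≤ d) (hd1 : d < 1) :
    ∃ e : ℕ → ℕ, (∀ i, e i < n) ∧ ∑' i, (e i : ℝ) / (n:ℝ) ^ (i + 1) = d := by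
  have hn0 : (0:ℝ) < n := by positivity
  have hn1 : (1:ℝ) < n := by exact_mod_cast by omega
  set A : ℕ → ℤ := fun k => ⌊d * (n:ℝ)^k⌋ with hA
  have hA0 : ∀ k, 0 ≤ A k := fun k => Int.floor_nonneg.2 (by positivity)
  have hAle : ∀ k, (A k : ℝ) ≤ d * (n:ℝ)^k := fun k => Int.floor_le _
  have hAlt : ∀ k, d * (n:ℝ)^k < A k + 1 := fun k => Int.lt_floor_add_one _
  have hkey : ∀ k, (n:ℤ) * A k ≤ A (k+1) ∧ A (k+1) < (n:ℤ) * A k + n := by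
    intro k
    constructor
    · apply Int.le_floor.2
      push_cast
      calc ((n:ℝ)) * (A k : ℝ) ≤ (n:ℝ) * (d * (n:ℝ)^k) := by
            have := hAle k; nlinarith
        _ = d * (n:ℝ)^(k+1) := by ring
    · apply Int.floor_lt.2
      push_cast
      calc d * (n:ℝ)^(k+1) = (n:ℝ) * (d * (n:ℝ)^k) := by ring
        _ < (n:ℝ) * ((A k : ℝ) + 1) := by
            have := hAlt k; nlinarith
        _ = (n:ℝ) * (A k:ℝ) + n := by ring
  set e : ℕ → ℕ := fun i => (A (i+1) - n * A i).toNat with he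
  have helt : ∀ i, e i < n := by
    intro i
    have h1 := (hkey i).1
    have h2 := (hkey i).2
    simp only [he]
    omega
  have hecast : ∀ i, (e i : ℝ) = (A (i+1) : ℝ) - n * A i := by
    intro i
    have h1 := (hkey i).1
    have : ((A (i+1) - n * A i).toNat : ℤ) = A (i+1) - n * A i := Int.toNat_of_nonneg (by omega)
    simp only [he]
    exact_mod_cast congrArg (fun z : ℤ => (z:ℝ)) this
  have hterm : ∀ i, (e i : ℝ) / (n:ℝ)^(i+1) = (A (i+1):ℝ)/(n:ℝ)^(i+1) - (A i:ℝ)/(n:ℝ)^i := by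
    intro i
    rw [hecast]
    have : (n:ℝ)^(i+1) = (n:ℝ)^i * n := by ring
    field_simp [this]
    ring
  have hpartial : ∀ k, ∑ i ∈ Finset.range k, (e i : ℝ) / (n:ℝ)^(i+1) = (A k : ℝ)/(n:ℝ)^k := by
    intro k
    rw [Finset.sum_congr rfl (fun i _ => hterm i), Finset.sum_range_sub (fun k => (A k:ℝ)/(n:ℝ)^k)]
    have hA00 : A 0 = 0 := by
      simp only [hA, pow_zero, mul_one]
      rw [Int.floor_eq_zero_iff]
      constructor <;> simp [hd0, hd1]
    simp [hA00]
  -- summability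
  have hsum : Summable (fun i => (e i : ℝ) / (n:ℝ)^(i+1)) := by
    apply Summable.of_nonneg_of_le (fun i => by positivity) (fun i => ?_)
      (summable_geometric_of_lt_one (r := 1/(n:ℝ)) (by positivity)
        (by rw [div_lt_one hn0]; exact hn1))
    rw [div_pow, one_pow, div_le_div_iff₀ (by positivity) (by positivity)]
    have h1 : (e i : ℝ) ≤ (n : ℝ) := by exact_mod_cast (helt i).le
    calc (e i : ℝ) * (n:ℝ)^i ≤ (n:ℝ) * (n:ℝ)^i := by gcongr
      _ = (n:ℝ)^(i+1) := by ring
      _ = 1 * (n:ℝ)^(i+1) := by ring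
  refine ⟨e, helt, ?_⟩
  -- partial sums tend to d
  have htends : Tendsto (fun k => ∑ i ∈ Finset.range k, (e i : ℝ) / (n:ℝ)^(i+1)) atTop (𝓝 d) := by
    have hbound : ∀ k : ℕ, |∑ i ∈ Finset.range k, (e i : ℝ) / (n:ℝ)^(i+1) - d| ≤ (1/(n:ℝ))^k := by
      intro k
      rw [hpartial]
      rw [abs_le]
      have h1 := hAle k
      have h2 := hAlt k
      have hp : (0:ℝ) < (n:ℝ)^k := by positivity
      constructor
      · have hrw : -((1:ℝ)/(n:ℝ))^k = (-1)/(n:ℝ)^k := by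
          rw [div_pow, one_pow]; ring
        rw [div_sub' (ne_of_gt hp), hrw, div_le_div_iff₀ hp hp]
        nlinarith
      · rw [sub_le_iff_le_add]
        calc (A k:ℝ)/(n:ℝ)^k ≤ d := by rw [div_le_iff₀ hp]; linarith
          _ ≤ (1/(n:ℝ))^k + d := by
              have : (0:ℝ) ≤ (1/(n:ℝ))^k := by positivity
              linarith
    have hgeo : Tendsto (fun k : ℕ => (1/(n:ℝ))^k) atTop (𝓝 0) := by
      apply tendsto_pow_atTop_nhds_zero_of_lt_one (by positivity)
      rw [div_lt_one hn0]; exact hn1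
    have : Tendsto (fun k => ∑ i ∈ Finset.range k, (e i : ℝ) / (n:ℝ)^(i+1) - d) atTop (𝓝 0) :=
      squeeze_zero_norm hbound hgeo
    have := this.add_const d
    simpa using this
  exact tendsto_nhds_unique (hsum.hasSum.tendsto_sum_nat) htends



section Fdef
variable (m : ℕ)

def digitSet : Set (ℕ → ℕ) := Set.univ.pi (fun _ : ℕ => ((D m : Finset ℕ) : Set ℕ))

noncomputable def Fset : Set ℝ := (g (nn m)) '' (digitSet m)

lemma mem_digitSet {m : ℕ} {c : ℕ → ℕ} : c ∈ digitSet m ↔ ∀ i, c i ∈ D m := by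
  simp [digitSet, Set.mem_pi]

lemma hnn (hm : 2 ≤ m) : 2 ≤ nn m := by simp [nn, sq]; nlinarith

lemma digit_lt {m : ℕ} (hm : 2 ≤ m) {c : ℕ → ℕ} (hc : c ∈ digitSet m) : ∀ i, c i < nn m :=
  fun i => D_lt_n m hm _ ((mem_digitSet).1 hc i)

lemma isCompact_Fset (hm : 2 ≤ m) : IsCompact (Fset m) := by
  have hcpt : IsCompact (digitSet m) :=
    isCompact_univ_pi (fun i => (D m).finite_toSet.isCompact)
  apply hcpt.image_of_continuousOn
  set n := nn m with hn
  have hn2 : 2 ≤ n := hnn m hm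
  have hn0 : (0:ℝ) < n := by positivity
  -- bounded modification is globally continuous
  have hcont : Continuous (fun c : ℕ → ℕ => ∑' i, ((min (c i) (n-1) : ℕ) : ℝ) / (n:ℝ)^(i+1)) := by
    apply continuous_tsum (f := fun i (c : ℕ → ℕ) => ((min (c i) (n-1) : ℕ) : ℝ) / (n:ℝ)^(i+1))
      (u := fun i => (1/(n:ℝ))^i)
    · intro i
      exact (Continuous.comp (continuous_of_discreteTopology
        (f := fun k : ℕ => ((min k (n-1) : ℕ) : ℝ) / (n:ℝ)^(i+1))) (continuous_apply i))
    · exact summable_geom n hn2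
    · intro i c
      rw [Real.norm_eq_abs, abs_of_nonneg (by positivity)]
      have : min (c i) (n-1) < n := by omega
      exact term_le n hn2 (fun j => min (c j) (n-1))
        (fun j => lt_of_le_of_lt (min_le_right _ _) (by omega)) i
  apply hcont.continuousOn.congr
  intro c hc
  have : ∀ i, c i = min (c i) (n-1) := by
    intro i
    have := digit_lt hm hc i
    omega
  simp only [g]
  congr 1
  funext i
  rw [← this i]

lemma Fset_subset (hm : 2 ≤ m) : Fset m ⊆ Set.Icc (0:ℝ) 1 := by
  rintro x ⟨c, hc, rfl⟩
  have hn2 : 2 ≤ nn m := hnn m hm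
  exact ⟨g_nonneg _ hn2 c, g_le_one _ hn2 c (digit_lt hm hc)⟩

lemma diffset (hm : 2 ≤ m) : ∀ d ∈ Set.Icc (0:ℝ) 1,
    ∃ x ∈ Fset m, ∃ y ∈ Fset m, |x - y| = d := by
  intro d ⟨hd0, hd1⟩
  set n := nn m with hn
  have hn2 : 2 ≤ n := hnn m hm
  have hn0 : (0:ℝ) < n := by positivity
  rcases eq_or_lt_of_le hd1 with h1 | h1
  · -- d = 1
    refine ⟨g n (fun _ => n - 1), ⟨fun _ => n-1, mem_digitSet.2 (fun i => nsub1_mem_D m hm), rfl⟩,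
      g n (fun _ => 0), ⟨fun _ => 0, mem_digitSet.2 (fun i => zero_mem_D m hm), rfl⟩, ?_⟩
    have hx : g n (fun _ => n - 1) = 1 := by
      rw [g, ← tsum_all_max n hn2]
      congr 1
      funext i
      congr 1
      push_cast [Nat.cast_sub (by omega : 1 ≤ n)]
      ring
    have hy : g n (fun _ => 0) = 0 := by simp [g]
    rw [hx, hy]
    simp [h1]
  · -- d < 1
    obtain ⟨e, helt, hesum⟩ := exists_digits n hn2 d hd0 h1
    choose a ha b hb hba hab using fun i => diff_digits m hm (e i) (helt i)
    have haD : ∀ i, a i ∈ D m := ha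
    have hbD : ∀ i, b i ∈ D m := hb
    have halt : ∀ i, a i < n := fun i => D_lt_n m hm _ (ha i)
    have hblt : ∀ i, b i < n := fun i => D_lt_n m hm _ (hb i)
    refine ⟨g n a, ⟨a, mem_digitSet.2 ha, rfl⟩, g n b, ⟨b, mem_digitSet.2 hb, rfl⟩, ?_⟩
    have hsub : g n a - g n b = d := by
      rw [g, g, ← Summable.tsum_sub (summable_aux n hn2 a halt) (summable_aux n hn2 b hblt)]
      rw [← hesum]
      congr 1
      funext i
      rw [div_sub_div_same]
      congr 1
      rw [← Nat.cast_sub (hba i), hab i]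
    rw [hsub, abs_of_nonneg hd0]

end Fdef


lemma coverNum_le {X : Type*} [PseudoMetricSpace X] (F : Set X) (r : ℝ) (s : Finset X)
    (h : F ⊆ ⋃ x ∈ s, closedBall x r) : coverNum F r ≤ s.card :=
  Nat.sInf_le ⟨s, rfl, h⟩

lemma sum_digits_lt (hn : 2 ≤ n) (k : ℕ) (h : ℕ → ℕ) (hh : ∀ i < k, h i < n) :
    ∑ i ∈ Finset.range k, h i * n ^ i < n ^ k := by
  induction k with
  | zero => simp
  | succ k ih =>
    rw [Finset.sum_range_succ]
    have h1 := ih (fun i hi => hh i (by omega))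
    have h3 : h k + 1 ≤ n := hh k (by omega)
    calc ∑ i ∈ Finset.range k, h i * n ^ i + h k * n ^ k
        < n ^ k + h k * n ^ k := by omega
      _ = (h k + 1) * n ^ k := by ring
      _ ≤ n * n ^ k := Nat.mul_le_mul_right _ h3
      _ = n ^ (k+1) := by ring

lemma val_inj (hn : 2 ≤ n) (k : ℕ) (h h' : ℕ → ℕ) (hh : ∀ i < k, h i < n)
    (hh' : ∀ i < k, h' i < n)
    (heq : ∑ i ∈ Finset.range k, h i * n ^ i = ∑ i ∈ Finset.range k, h' i * n ^ i) :
    ∀ i < k, h i = h' i := by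
  induction k with
  | zero => omega
  | succ k ih =>
    rw [Finset.sum_range_succ, Finset.sum_range_succ] at heq
    have e1 := sum_digits_lt n hn k h (fun i hi => hh i (by omega))
    have e2 := sum_digits_lt n hn k h' (fun i hi => hh' i (by omega))
    have hk : h k = h' k := by
      rcases Nat.lt_trichotomy (h k) (h' k) with hlt | heqk | hgt
      · exfalso
        have : ∑ i ∈ Finset.range k, h i * n ^ i + h k * n ^ k
            < ∑ i ∈ Finset.range k, h' i * n ^ i + h' k * n ^ k := by
          calc ∑ i ∈ Finset.range k, h i * n ^ i + h k * n ^ k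
              < n ^ k + h k * n ^ k := by omega
            _ = (h k + 1) * n ^ k := by ring
            _ ≤ h' k * n ^ k := Nat.mul_le_mul_right _ (by omega)
            _ ≤ ∑ i ∈ Finset.range k, h' i * n ^ i + h' k * n ^ k := by omega
        omega
      · exact heqk
      · exfalso
        have : ∑ i ∈ Finset.range k, h' i * n ^ i + h' k * n ^ k
            < ∑ i ∈ Finset.range k, h i * n ^ i + h k * n ^ k := by
          calc ∑ i ∈ Finset.range k, h' i * n ^ i + h' k * n ^ k
              < n ^ k + h' k * n ^ k := by omega
            _ = (h' k + 1) * n ^ k := by ring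
            _ ≤ h k * n ^ k := Nat.mul_le_mul_right _ (by omega)
            _ ≤ ∑ i ∈ Finset.range k, h i * n ^ i + h k * n ^ k := by omega
        omega
    have hlow : ∑ i ∈ Finset.range k, h i * n ^ i = ∑ i ∈ Finset.range k, h' i * n ^ i := by
      rw [hk] at heq
      omega
    intro i hi
    rcases Nat.lt_or_ge i k with h2 | h2
    · exact ih (fun j hj => hh j (by omega)) (fun j hj => hh' j (by omega)) hlow i h2
    · have : i = k := by omega
      rw [this, hk]

/-- reversed-weight version -/
lemma val_inj' (hn : 2 ≤ n) (k : ℕ) (c c' : ℕ → ℕ) (hc : ∀ i < k, c i < n)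
    (hc' : ∀ i < k, c' i < n)
    (heq : ∑ i ∈ Finset.range k, c i * n ^ (k - 1 - i) = ∑ i ∈ Finset.range k, c' i * n ^ (k - 1 - i)) :
    ∀ i < k, c i = c' i := by
  have hrefl : ∀ d : ℕ → ℕ, ∑ i ∈ Finset.range k, d i * n ^ (k - 1 - i)
      = ∑ i ∈ Finset.range k, d (k - 1 - i) * n ^ i := by
    intro d
    rw [← Finset.sum_range_reflect (fun i => d (k - 1 - i) * n ^ i) k]
    apply Finset.sum_congr rfl
    intro i hi
    have hik : i < k := Finset.mem_range.1 hi
    congr 2 <;> omega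
  rw [hrefl c, hrefl c'] at heq
  have h2 := val_inj n hn k (fun i => c (k - 1 - i)) (fun i => c' (k - 1 - i))
    (fun i hi => hc _ (by omega)) (fun i hi => hc' _ (by omega)) heq
  intro i hi
  have := h2 (k - 1 - i) (by omega)
  have hii : k - 1 - (k - 1 - i) = i := by omega
  rwa [hii] at this

lemma realPrefix_mul (hn : 2 ≤ n) (k : ℕ) (c : ℕ → ℕ) :
    (∑ i ∈ Finset.range k, (c i : ℝ) / (n:ℝ) ^ (i+1)) * (n:ℝ) ^ k
      = ((∑ i ∈ Finset.range k, c i * n ^ (k - 1 - i) : ℕ) : ℝ) := by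
  have hn0 : (0:ℝ) < n := by positivity
  push_cast
  rw [Finset.sum_mul]
  apply Finset.sum_congr rfl
  intro i hi
  have hik : i < k := Finset.mem_range.1 hi
  have hsplit : (n:ℝ)^k = (n:ℝ)^(i+1) * (n:ℝ)^(k-1-i) := by
    rw [← pow_add]
    congr 1
    omega
  rw [hsplit]
  field_simp



section Cover
variable (m : ℕ)

lemma cover_bound (hm : 2 ≤ m) (x r R : ℝ) (hr : 0 < r)
    (k l : ℕ) (hkl : k < l)
    (hlr : (1/(nn m:ℝ))^l ≤ r) (hRk : R ≤ (1/(nn m:ℝ))^k) :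
    coverNum (Fset m ∩ closedBall x R) r ≤ 5 * (D m).card ^ (l - k) := by
  classical
  set n := nn m with hn
  have hn2 : 2 ≤ n := hnn m hm
  have hn0 : (0:ℝ) < n := by positivity
  set ξ : ℝ := 1/(n:ℝ) with hξ
  have hξ0 : (0:ℝ) < ξ := by positivity
  have hξ1 : ξ ≤ 1 := by rw [hξ, div_le_one hn0]; exact_mod_cast by omega
  set ext : (Fin l → ℕ) → (ℕ → ℕ) := fun c i => if h : i < l then c ⟨i, h⟩ else 0 with hext
  set A : Finset (ℕ → ℕ) := (Fintype.piFinset (fun _ : Fin l => D m)).image ext with hA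
  set pre : (ℕ → ℕ) → ℝ := fun c => ∑ i ∈ Finset.range l, (c i : ℝ)/(n:ℝ)^(i+1) with hpre
  set cen : (ℕ → ℕ) → ℝ := fun c => pre c + ξ^l/2 with hcen
  set V : Finset (ℕ → ℕ) := A.filter (fun c => |cen c - x| ≤ R + ξ^l/2) with hV
  have hAmem : ∀ c ∈ A, (∀ i, i < l → c i ∈ D m) ∧ ∀ i, l ≤ i → c i = 0 := by
    intro c hc
    rcases Finset.mem_image.1 hc with ⟨c0, hc0, rfl⟩
    constructor
    · intro i hi
      simp only [hext]
      rw [dif_pos hi]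
      exact Fintype.mem_piFinset.1 hc0 _
    · intro i hi
      simp only [hext]
      rw [dif_neg (by omega)]
  -- coverage
  have hcover : Fset m ∩ closedBall x R ⊆ ⋃ p ∈ V.image cen, closedBall p r := by
    rintro y ⟨⟨d, hd, rfl⟩, hyB⟩
    have hdlt := digit_lt hm hd
    set c : ℕ → ℕ := fun i => if i < l then d i else 0 with hc
    have hcA : c ∈ A := by
      apply Finset.mem_image.2
      refine ⟨fun i : Fin l => d i, Fintype.mem_piFinset.2 (fun i => mem_digitSet.1 hd i), ?_⟩
      funext i
      simp only [hext, hc]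
      by_cases h : i < l
      · rw [dif_pos h, if_pos h]
      · rw [dif_neg h, if_neg h]
    have hsum := summable_aux n hn2 d hdlt
    have hsplit : g n d = pre c + ∑' i, (d (i + l) : ℝ)/(n:ℝ)^((i+l)+1) := by
      rw [g, ← Summable.sum_add_tsum_nat_add l hsum]
      congr 1
      apply Finset.sum_congr rfl
      intro i hi
      have hil : i < l := Finset.mem_range.1 hi
      simp only [hc]
      rw [if_pos hil]
    set tail := ∑' i, (d (i + l) : ℝ)/(n:ℝ)^((i+l)+1) with htail
    have htail0 : 0 ≤ tail := tsum_nonneg (fun i => by positivity)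
    have htaille : tail ≤ ξ^l := by
      rw [htail]
      have hcongr : ∀ i : ℕ, (d (i + l) : ℝ)/(n:ℝ)^((i+l)+1) = (d (l + i) : ℝ)/(n:ℝ)^((l+i)+1) := by
        intro i
        rw [Nat.add_comm i l]
      rw [tsum_congr hcongr]
      exact tsum_tail_le n hn2 d hdlt l
    have hyc : |g n d - cen c| ≤ ξ^l/2 := by
      rw [hsplit, hcen]
      rw [abs_le]
      constructor <;> simp only [] <;> linarith
    have hcV : c ∈ V := by
      rw [hV, Finset.mem_filter]
      refine ⟨hcA, ?_⟩
      have hxy : |g n d - x| ≤ R := by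
        rw [← Real.dist_eq]
        exact mem_closedBall.1 hyB
      calc |cen c - x| ≤ |cen c - g n d| + |g n d - x| := abs_sub_le _ _ _
        _ ≤ ξ^l/2 + R := by
            rw [abs_sub_comm]
            exact add_le_add hyc hxy
        _ = R + ξ^l/2 := by ring
    apply Set.mem_iUnion₂.2
    refine ⟨cen c, Finset.mem_image_of_mem cen hcV, ?_⟩
    rw [mem_closedBall, Real.dist_eq]
    calc |g n d - cen c| ≤ ξ^l/2 := hyc
      _ ≤ ξ^l := by linarith [pow_pos hξ0 l]
      _ ≤ r := hlr
  -- counting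
  have hcount : V.card ≤ 5 * (D m).card ^ (l - k) := by
    set Nval : (ℕ → ℕ) → ℕ := fun c => ∑ i ∈ Finset.range k, c i * n ^ (k - 1 - i) with hNval
    set α : ℝ := (x - R - ξ^l - ξ^k) * (n:ℝ)^k with hα
    set ψ : (ℕ → ℕ) → ℤ × (ℕ → ℕ) :=
      fun c => ((Nval c : ℤ), fun i => if i < l - k then c (k + i) else 0) with hψ
    set ext2 : (Fin (l-k) → ℕ) → (ℕ → ℕ) := fun c i => if h : i < l - k then c ⟨i, h⟩ else 0 with hext2
    set B : Finset (ℕ → ℕ) := (Fintype.piFinset (fun _ : Fin (l-k) => D m)).image ext2 with hB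
    have hcardT : ((Finset.Icc (⌈α⌉ : ℤ) (⌈α⌉+4)) ×ˢ B).card ≤ 5 * (D m).card ^ (l - k) := by
      rw [Finset.card_product]
      have h1 : (Finset.Icc (⌈α⌉ : ℤ) (⌈α⌉+4)).card = 5 := by
        rw [Int.card_Icc]
        omega
      rw [h1]
      have h2 : B.card ≤ (D m).card ^ (l - k) := by
        calc B.card ≤ (Fintype.piFinset (fun _ : Fin (l-k) => D m)).card := Finset.card_image_le
          _ = (D m).card ^ (l-k) := by
              rw [Fintype.card_piFinset]
              simp
      exact Nat.mul_le_mul_left 5 h2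
    refine le_trans (Finset.card_le_card_of_injOn ψ ?_ ?_) hcardT
    · -- maps into
      intro c hcV
      rcases Finset.mem_filter.1 hcV with ⟨hcA', hcdist⟩
      obtain ⟨hcD, hczero⟩ := hAmem c hcA'
      have clt : ∀ i, c i < n := by
        intro i
        rcases lt_or_ge i l with h | h
        · exact D_lt_n m hm _ (hcD i h)
        · rw [hczero i h]; omega
      set preK : ℝ := ∑ i ∈ Finset.range k, (c i : ℝ)/(n:ℝ)^(i+1) with hpreK
      have hsplitK : pre c = preK + ∑ i ∈ Finset.Ico k l, (c i : ℝ)/(n:ℝ)^(i+1) := by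
        rw [hpre, hpreK]
        simp only []
        rw [Finset.range_eq_Ico, ← Finset.sum_Ico_consecutive _ (Nat.zero_le k) hkl.le]
        rw [← Finset.range_eq_Ico]
      set mid : ℝ := ∑ i ∈ Finset.Ico k l, (c i : ℝ)/(n:ℝ)^(i+1) with hmid
      have hmid0 : 0 ≤ mid := Finset.sum_nonneg (fun i _ => by positivity)
      have hmidle : mid ≤ ξ^k := by
        rw [hmid, Finset.sum_Ico_eq_sum_range]
        calc ∑ i ∈ Finset.range (l - k), (c (k + i) : ℝ)/(n:ℝ)^((k+i)+1)
            ≤ ∑' i, (c (k + i) : ℝ)/(n:ℝ)^((k+i)+1) := by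
              apply Summable.sum_le_tsum _ (fun i _ => by positivity) (summable_shift n hn2 c clt k)
          _ ≤ ξ^k := tsum_tail_le n hn2 c clt k
      -- bounds on preK
      have habs := abs_le.1 hcdist
      have hpreKlb : x - R - ξ^l - ξ^k ≤ preK := by
        have := habs.1
        rw [hcen] at this
        simp only [] at this
        rw [hsplitK] at this
        linarith
      have hpreKub : preK ≤ x + R := by
        have := habs.2
        rw [hcen] at this
        simp only [] at this
        rw [hsplitK] at this
        linarith [pow_pos hξ0 l]
      have hNeq : (Nval c : ℝ) = preK * (n:ℝ)^k := (realPrefix_mul n hn2 k c).symm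
      have hnk0 : (0:ℝ) < (n:ℝ)^k := by positivity
      have hprod : ξ^k * (n:ℝ)^k = 1 := by
        rw [hξ, ← mul_pow]
        field_simp
        exact one_pow k
      have hNlb : α ≤ (Nval c : ℝ) := by
        rw [hNeq, hα]
        exact mul_le_mul_of_nonneg_right hpreKlb hnk0.le
      have hNub : (Nval c : ℝ) ≤ α + 4 := by
        rw [hNeq, hα]
        have hξlk : ξ^l ≤ ξ^k := pow_le_pow_of_le_one hξ0.le hξ1 hkl.le
        have hRξ : R ≤ ξ^k := hRk
        nlinarith
      rw [Finset.mem_coe, Finset.mem_product]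
      constructor
      · rw [Finset.mem_Icc]
        constructor
        · exact Int.ceil_le.2 (by exact_mod_cast hNlb)
        · have h4 : ((Nval c : ℤ) : ℝ) ≤ (⌈α⌉ : ℝ) + 4 := by
            push_cast
            calc (Nval c : ℝ) ≤ α + 4 := hNub
              _ ≤ (⌈α⌉ : ℝ) + 4 := by linarith [Int.le_ceil α]
          exact_mod_cast h4
      · apply Finset.mem_image.2
        refine ⟨fun i : Fin (l-k) => c (k + i), Fintype.mem_piFinset.2 (fun i => ?_), ?_⟩
        · exact hcD _ (by omega)
        · funext i
          simp only [hext2, hψ]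
          by_cases h : i < l - k
          · rw [dif_pos h, if_pos h]
          · rw [dif_neg h, if_neg h]
    · -- injective
      intro c hc c' hc' hψeq
      simp only [Finset.mem_coe] at hc hc'
      obtain ⟨hcD, hc0⟩ := hAmem c (Finset.mem_filter.1 hc).1
      obtain ⟨hcD', hc0'⟩ := hAmem c' (Finset.mem_filter.1 hc').1
      have h1 : Nval c = Nval c' := by
        have := congrArg Prod.fst hψeq
        simp only [hψ] at this
        exact_mod_cast this
      have h2 : ∀ i, (if i < l - k then c (k + i) else 0) = (if i < l - k then c' (k + i) else 0) := by
        intro i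
        have := congrArg Prod.snd hψeq
        simp only [hψ] at this
        exact congrFun this i
      have hlow := val_inj' n hn2 k c c'
        (fun i hi => D_lt_n m hm _ (hcD i (by omega)))
        (fun i hi => D_lt_n m hm _ (hcD' i (by omega))) h1
      funext j
      rcases lt_or_ge j k with h | h
      · exact hlow j h
      rcases lt_or_ge j l with h' | h'
      · have h3 := h2 (j - k)
        rw [if_pos (by omega : j - k < l - k), if_pos (by omega : j - k < l - k)] at h3
        rwa [show k + (j - k) = j by omega] at h3
      · rw [hc0 j h', hc0' j h']
  calc coverNum (Fset m ∩ closedBall x R) r ≤ (V.image cen).card := coverNum_le _ _ _ hcover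
    _ ≤ V.card := Finset.card_image_le
    _ ≤ 5 * (D m).card ^ (l-k) := hcount

end Cover
end AD

namespace AD

lemma main_est (m : ℕ) (hm : 2 ≤ m) (s : ℝ) (hs0 : 0 ≤ s) (hs1 : s ≤ 1)
    (hDs : ((D m).card : ℝ) ≤ (nn m : ℝ) ^ s) :
    ∀ x ∈ Fset m, ∀ R > 0, ∀ r : ℝ, 0 < r → r < R →
      (coverNum (Fset m ∩ closedBall x R) r : ℝ) ≤ (5 * (nn m:ℝ)^(2:ℕ)) * (R / r) ^ s := by
  classical
  intro x hx R hR r hr hrR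
  set n := nn m with hnd
  have hn2 : 2 ≤ n := hnn m hm
  have hn0 : (0:ℝ) < n := by positivity
  have hn1 : (1:ℝ) ≤ n := by exact_mod_cast by omega
  set ξ : ℝ := 1/(n:ℝ) with hξ
  have hξ0 : (0:ℝ) < ξ := by positivity
  have hξ1 : ξ < 1 := by rw [hξ, div_lt_one hn0]; exact_mod_cast by omega
  have hRr1 : (1:ℝ) ≤ R / r := by rw [le_div_iff₀ hr]; linarith
  have hRrs1 : (1:ℝ) ≤ (R/r)^s := by
    calc (1:ℝ) = 1 ^ s := (Real.one_rpow s).symm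
      _ ≤ (R/r)^s := Real.rpow_le_rpow zero_le_one hRr1 hs0
  have hC1 : (1:ℝ) ≤ 5 * (n:ℝ)^(2:ℕ) := by nlinarith
  by_cases hr1 : 1 ≤ r
  · -- one ball suffices
    have hcov : Fset m ∩ closedBall x R ⊆ ⋃ p ∈ ({x} : Finset ℝ), closedBall p r := by
      rintro y ⟨hyF, -⟩
      apply Set.mem_iUnion₂.2
      refine ⟨x, Finset.mem_singleton_self x, ?_⟩
      rw [mem_closedBall, Real.dist_eq]
      have h1 := Fset_subset m hm hyF
      have h2 := Fset_subset m hm hx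
      rw [Set.mem_Icc] at h1 h2
      rw [abs_le]
      constructor <;> linarith
    have h1 : coverNum (Fset m ∩ closedBall x R) r ≤ 1 := by
      have := coverNum_le (Fset m ∩ closedBall x R) r {x} hcov
      simpa using this
    calc (coverNum (Fset m ∩ closedBall x R) r : ℝ) ≤ 1 := by exact_mod_cast h1
      _ ≤ (5 * (n:ℝ)^(2:ℕ)) * (R/r)^s := by nlinarith
  · push_neg at hr1
    -- choose scales
    have hex : ∃ l : ℕ, ξ^l ≤ r := by
      obtain ⟨l, hl⟩ := exists_pow_lt_of_lt_one hr hξ1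
      exact ⟨l, hl.le⟩
    set l := Nat.find hex with hld
    have hl : ξ^l ≤ r := Nat.find_spec hex
    have hlpos : 0 < l := by
      rcases Nat.eq_zero_or_pos l with h | h
      · exfalso
        rw [h] at hl
        simp at hl
        linarith
      · exact h
    have hlmin : r < ξ^(l-1) := by
      have := Nat.find_min hex (show l - 1 < l by omega)
      push_neg at this
      exact this
    set R' := min R 1 with hR'd
    have hR'0 : 0 < R' := lt_min hR one_pos
    have hrR' : r < R' := lt_min hrR hr1
    have hR'le : R' ≤ R := min_le_left _ _
    have hR'1 : R' ≤ 1 := min_le_right _ _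
    set k := Nat.findGreatest (fun j => R' ≤ ξ^j) l with hkd
    have hk0 : R' ≤ ξ^k := by
      exact Nat.findGreatest_spec (P := fun j => R' ≤ ξ^j) (Nat.zero_le l) (by simpa using hR'1)
    have hkle : k ≤ l := Nat.findGreatest_le l
    have hkl : k < l := by
      rcases eq_or_lt_of_le hkle with h | h
      · exfalso
        rw [h] at hk0
        linarith
      · exact h
    have hk1 : ξ^(k+1) < R' := by
      have := Nat.findGreatest_is_greatest (P := fun j => R' ≤ ξ^j)
        (show k < k + 1 by omega) (show k + 1 ≤ l by omega)
      exact lt_of_not_ge this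
    -- reduce to ball of radius R'
    have hseteq : Fset m ∩ closedBall x R = Fset m ∩ closedBall x R' := by
      rcases le_total R 1 with h | h
      · rw [hR'd, min_eq_left h]
      · have h2 : R' = 1 := min_eq_right h
        apply Set.eq_of_subset_of_subset
        · rintro y ⟨hyF, -⟩
          refine ⟨hyF, ?_⟩
          rw [mem_closedBall, Real.dist_eq, h2]
          have h3 := Fset_subset m hm hyF
          have h4 := Fset_subset m hm hx
          rw [Set.mem_Icc] at h3 h4
          rw [abs_le]
          constructor <;> linarith
        · rintro y ⟨hyF, hyB⟩
          refine ⟨hyF, ?_⟩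
          rw [mem_closedBall] at hyB ⊢
          calc dist y x ≤ R' := hyB
            _ ≤ R := hR'le
    have hcb := cover_bound m hm x r R' hr k l hkl hl hk0
    rw [hseteq]
    -- arithmetic
    set j := l - k with hjd
    have hj1 : 1 ≤ j := by omega
    have hkey : (n:ℝ)^((j:ℝ) - 2) ≤ R / r := by
      rcases Nat.lt_or_ge j 2 with h2 | h2
      · have hj : j = 1 := by omega
        rw [hj]
        have : ((1:ℕ):ℝ) - 2 = (-1 : ℝ) := by norm_num
        rw [this, Real.rpow_neg_one]
        calc ((n:ℝ))⁻¹ ≤ 1 := by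
              rw [inv_le_one_iff₀]
              right; exact hn1
          _ ≤ R / r := hRr1
      · -- j ≥ 2
        have hcast : (n:ℝ)^((j:ℝ) - 2) = (n:ℝ)^(j - 2 : ℕ) := by
          rw [← Real.rpow_natCast (n:ℝ) (j-2)]
          congr 1
          push_cast [Nat.cast_sub h2]
          ring
        rw [hcast]
        have hmul : (n:ℝ)^(j-2:ℕ) * (n:ℝ)^(k+1) = (n:ℝ)^(l-1) := by
          rw [← pow_add]
          congr 1
          omega
        have hpow : ξ^(k+1) / ξ^(l-1) = (n:ℝ)^(j-2:ℕ) := by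
          rw [hξ, div_pow, div_pow, one_pow, one_pow]
          field_simp
          linarith [hmul]
        have h3 : ξ^(k+1) / ξ^(l-1) ≤ R' / r :=
          div_le_div₀ hR'0.le hk1.le hr hlmin.le
        calc (n:ℝ)^(j-2:ℕ) = ξ^(k+1)/ξ^(l-1) := hpow.symm
          _ ≤ R'/r := h3
          _ ≤ R/r := by gcongr
    have hchain2 : ((5 * (D m).card ^ j : ℕ) : ℝ) ≤ (5*(n:ℝ)^(2:ℕ)) * (R/r)^s := by
      push_cast
      have hD0 : (0:ℝ) ≤ ((D m).card : ℝ) := by positivity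
      have t1 : ((D m).card : ℝ)^j ≤ ((n:ℝ)^s)^j := pow_le_pow_left₀ hD0 hDs j
      have t2 : ((n:ℝ)^s)^j = (n:ℝ)^(s * (j:ℝ)) := by
        rw [← Real.rpow_natCast ((n:ℝ)^s) j, ← Real.rpow_mul hn0.le]
      have t3 : (n:ℝ)^(s*(j:ℝ)) = (n:ℝ)^(2*s) * (n:ℝ)^(s*((j:ℝ)-2)) := by
        rw [← Real.rpow_add hn0]
        congr 1
        ring
      have t4 : (n:ℝ)^(s*((j:ℝ)-2)) ≤ (R/r)^s := by
        have heq : (n:ℝ)^(s*((j:ℝ)-2)) = ((n:ℝ)^((j:ℝ)-2))^s := by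
          rw [← Real.rpow_mul hn0.le]
          congr 1
          ring
        rw [heq]
        exact Real.rpow_le_rpow (Real.rpow_nonneg hn0.le _) hkey hs0
      have t5 : (n:ℝ)^(2*s) ≤ ((n:ℝ)^(2:ℕ) : ℝ) := by
        calc (n:ℝ)^(2*s) ≤ (n:ℝ)^(2:ℝ) := Real.rpow_le_rpow_of_exponent_le hn1 (by linarith)
          _ = (n:ℝ)^(2:ℕ) := by
              rw [← Real.rpow_natCast (n:ℝ) 2]
              norm_num
      have h0 : (0:ℝ) ≤ (n:ℝ)^(s*((j:ℝ)-2)) := Real.rpow_nonneg hn0.le _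
      have h0' : (0:ℝ) ≤ (n:ℝ)^(2*s) := Real.rpow_nonneg hn0.le _
      calc (5:ℝ) * ((D m).card : ℝ)^j ≤ 5 * ((n:ℝ)^(2*s) * (n:ℝ)^(s*((j:ℝ)-2))) := by
            rw [← t3, ← t2]
            linarith [t1]
        _ ≤ 5 * (((n:ℝ)^(2:ℕ):ℝ) * (R/r)^s) := by
            have := mul_le_mul t5 t4 h0 (by positivity : (0:ℝ) ≤ ((n:ℝ)^(2:ℕ):ℝ))
            linarith
        _ = (5*(n:ℝ)^(2:ℕ)) * (R/r)^s := by ring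
    calc (coverNum (Fset m ∩ closedBall x R') r : ℝ)
        ≤ ((5 * (D m).card ^ j : ℕ) : ℝ) := by exact_mod_cast hcb
      _ ≤ (5*(n:ℝ)^(2:ℕ)) * (R/r)^s := hchain2

end AD

/-- For every `σ > 0` there is a compact `F ⊆ [0,1]` of Assouad dimension
at most `1/2 + σ` whose difference set contains `[0,1]`. -/
theorem exists_compact_assouad_half_diff_set (σ : ℝ) (hσ : 0 < σ) :
    ∃ F : Set ℝ, IsCompact F ∧ F ⊆ Set.Icc (0:ℝ) 1 ∧ assouadDim F ≤ 1/2 + σ ∧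
      ∀ d ∈ Set.Icc (0:ℝ) 1, ∃ x ∈ F, ∃ y ∈ F, |x - y| = d := by
  classical
  set σ' := min σ (1/2) with hσ'd
  have hσ'0 : 0 < σ' := lt_min hσ (by norm_num)
  have hσ'le : σ' ≤ 1/2 := min_le_right _ _
  have hσ'σ : σ' ≤ σ := min_le_left _ _
  obtain ⟨m, hmge⟩ := exists_nat_ge (max 2 ((2:ℝ)^((1:ℝ)/(2*σ'))))
  have hm2 : 2 ≤ m := by
    have h1 : (2:ℝ) ≤ (m:ℝ) := le_trans (le_max_left _ _) hmge
    exact_mod_cast h1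
  have hmr : (2:ℝ)^((1:ℝ)/(2*σ')) ≤ (m:ℝ) := le_trans (le_max_right _ _) hmge
  have hm0 : (0:ℝ) < m := by
    have h1 : (2:ℝ) ≤ (m:ℝ) := le_trans (le_max_left _ _) hmge
    linarith
  have hms : (2:ℝ) ≤ (m:ℝ)^(2*σ') := by
    have h1 : ((2:ℝ)^((1:ℝ)/(2*σ')))^(2*σ') ≤ (m:ℝ)^(2*σ') :=
      Real.rpow_le_rpow (Real.rpow_nonneg (by norm_num) _) hmr (by positivity)
    have h2 : ((2:ℝ)^((1:ℝ)/(2*σ')))^(2*σ') = 2 := by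
      rw [← Real.rpow_mul (by norm_num : (0:ℝ) ≤ 2)]
      have h3 : (1:ℝ)/(2*σ') * (2*σ') = 1 := by field_simp
      rw [h3, Real.rpow_one]
    linarith
  set s := 1/2 + σ' with hsd
  have hs0 : (0:ℝ) ≤ s := by rw [hsd]; linarith
  have hs1 : s ≤ 1 := by rw [hsd]; linarith
  have hDs : ((AD.D m).card : ℝ) ≤ (AD.nn m : ℝ)^s := by
    have h1 : ((AD.D m).card : ℝ) ≤ 2*(m:ℝ) := by exact_mod_cast AD.card_D_le m
    have h2 : ((AD.nn m : ℕ) : ℝ) = (m:ℝ)^(2:ℕ) := by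
      push_cast [AD.nn]
      ring
    rw [h2, ← Real.rpow_natCast (m:ℝ) 2, ← Real.rpow_mul hm0.le]
    have h3 : (m:ℝ)^((2:ℕ)*s) = (m:ℝ)^(1:ℝ) * (m:ℝ)^(2*σ') := by
      rw [← Real.rpow_add hm0]
      congr 1
      rw [hsd]
      push_cast
      ring
    rw [h3, Real.rpow_one]
    calc ((AD.D m).card:ℝ) ≤ 2*(m:ℝ) := h1
      _ ≤ (m:ℝ) * (m:ℝ)^(2*σ') := by nlinarith
  refine ⟨AD.Fset m, AD.isCompact_Fset m hm2, AD.Fset_subset m hm2, ?_, AD.diffset m hm2⟩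
  have hnpos : (0:ℝ) < (AD.nn m : ℝ) := by
    have h := AD.hnn m hm2
    exact_mod_cast (by omega : 0 < AD.nn m)
  have hle : assouadDim (AD.Fset m) ≤ s := by
    apply csInf_le
    · exact ⟨0, fun t ht => ht.1⟩
    · exact ⟨hs0, 5*(AD.nn m:ℝ)^(2:ℕ), by positivity, AD.main_est m hm2 s hs0 hs1 hDs⟩
  calc assouadDim (AD.Fset m) ≤ s := hle
    _ ≤ 1/2 + σ := by rw [hsd]; linarith
end
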